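/- arXiv:2202.11627 — 3 statements merged into one kernel-verified Lean document; each statement's English description precedes it below -/
import Mathlib

section
/- Let 𝒜 = 𝒟 ∪ 𝒟′, where 𝒟′ is the set of paths in ℰ containing exactly one catastrophe step C_k (for some k ≥ 2), this catastrophe being the last step of the path. Then for every path P ∈ ℰ there exists exactly one path Q ∈ 𝒜 with |Q| = |P| such that P and Q are U-equivalent. In other words, 𝒜 is a complete set of representatives of the U-equivalence classes of ℰ. -/
/-- Steps of a Dyck path with catastrophes: up-step `U`, down-step `D`,
and catastrophe step `C k` of size `k` (valid paths only use `k ≥ 2`). -/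
inductive Step where
  | U : Step
  | D : Step
  | C : ℕ → Step
  deriving DecidableEq

/-- The vertical displacement of a step. -/
def Step.val : Step → ℤ
  | .U => 1
  | .D => -1
  | .C k => -(k : ℤ)

/-- The height (ordinate) of the path after its first `i` steps. -/
def hgt (P : List Step) (i : ℕ) : ℤ := ((P.take i).map Step.val).sum

/-- `InE P` means `P` is a Dyck path with catastrophes (a member of ℰ):
it stays at height ≥ 0, ends on the x-axis, and every catastrophe step
`C k` has `k ≥ 2` and starts at height `k` (hence ends on the x-axis). -/
def InE (P : List Step) : Prop :=
  (∀ i, 0 ≤ hgt P i) ∧ hgt P P.length = 0 ∧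
    ∀ i k, P[i]? = some (Step.C k) → 2 ≤ k ∧ hgt P i = (k : ℤ)

/-- `(UD)^k`. -/
def UDpow (k : ℕ) : List Step := (List.replicate k [Step.U, Step.D]).flatten

/-- `(DU)^k`. -/
def DUpow (k : ℕ) : List Step := (List.replicate k [Step.D, Step.U]).flatten

/-- `U^k`. -/
def Upow (k : ℕ) : List Step := List.replicate k Step.U

/-- `C_s` with the convention `C_1 = D`. -/
def cfin (s : ℕ) : Step := if s = 1 then Step.D else Step.C s

/-- Test whether a step is a catastrophe step. -/
def isCatB : Step → Bool
  | .C _ => true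
  | _ => false

/-- The number of catastrophe steps in a path. -/
def catCount (P : List Step) : ℕ := P.countP isCatB

/-- Two paths are `U`-equivalent when their up-steps occur at the same positions. -/
def UEquiv (P Q : List Step) : Prop :=
  ∀ i : ℕ, P[i]? = some Step.U ↔ Q[i]? = some Step.U

/-- Membership in 𝒜 = 𝒟 ∪ 𝒟′ : either a Dyck path (no catastrophe), or a path of ℰ
with exactly one catastrophe, this catastrophe being the last step. -/
def InA (P : List Step) : Prop :=
  InE P ∧ (catCount P = 0 ∨
    (catCount P = 1 ∧ ∃ k, 2 ≤ k ∧ P.getLast? = some (Step.C k)))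

lemma hgt_zero (P : List Step) : hgt P 0 = 0 := by simp [hgt]

lemma hgt_succ (P : List Step) (i : ℕ) :
    hgt P (i + 1) = hgt P i + ((P[i]?.map Step.val).getD 0) := by
  rcases Nat.lt_or_ge i P.length with h | h
  · rw [hgt, hgt, List.map_take, List.map_take,
      List.sum_take_succ _ _ (by simpa using h)]
    simp [List.getElem?_eq_getElem h]
  · rw [hgt, hgt, List.take_of_length_le h, List.take_of_length_le (by omega),
      List.getElem?_eq_none h]
    simp

lemma hgt_of_length_le (P : List Step) (i : ℕ) (h : P.length ≤ i) :
    hgt P i = hgt P P.length := by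
  rw [hgt, hgt, List.take_of_length_le h, List.take_length]

lemma hgt_congr (Q R : List Step) (i : ℕ) (h : ∀ j < i, Q[j]? = R[j]?) :
    hgt Q i = hgt R i := by
  induction i with
  | zero => simp [hgt_zero]
  | succ m ih =>
      rw [hgt_succ, hgt_succ, ih (fun j hj => h j (by omega)), h m (by omega)]

def toD (s : Step) : Step := if s = Step.U then Step.U else Step.D


/-- 𝒜 is a complete set of representatives of the U-equivalence classes of ℰ. -/
theorem A_complete_set_of_representatives_for_UEquiv (P : List Step) (hP : InE P) :
    ∃! Q : List Step, InA Q ∧ Q.length = P.length ∧ UEquiv P Q := by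
  classical
  obtain ⟨hPpos, hPend, hPcat⟩ := hP
  set n := P.length with hn
  set R := P.map toD with hRdef
  have hRlen : R.length = n := by simp [hRdef, hn]
  have hRget : ∀ i : ℕ, R[i]? = P[i]?.map toD := by
    intro i; simp [hRdef]
  -- R has no catastrophe steps
  have hRnoC : ∀ (i k : ℕ), R[i]? ≠ some (Step.C k) := by
    intro i k hik
    rw [hRget] at hik
    rcases hx : P[i]? with _ | s
    · simp [hx] at hik
    · rw [hx] at hik
      simp only [Option.map_some, Option.some.injEq] at hik
      unfold toD at hik; split at hik <;> simp_all
  have hRcount : catCount R = 0 := by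
    rw [catCount, List.countP_eq_zero]
    intro a ha
    rw [hRdef] at ha
    obtain ⟨s, _, rfl⟩ := List.mem_map.mp ha
    unfold toD; split <;> simp [isCatB]
  -- U-equivalence of P and R
  have hUR : UEquiv P R := by
    intro i
    rw [hRget]
    rcases hx : P[i]? with _ | s
    · simp
    · simp only [Option.map_some, Option.some.injEq]
      constructor
      · rintro rfl; rfl
      · intro h; unfold toD at h; split at h <;> simp_all
  -- heights of R dominate heights of P
  have hcomp : ∀ i, hgt P i ≤ hgt R i := by
    intro i
    induction i with
    | zero => simp [hgt_zero]
    | succ m ih =>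
        rw [hgt_succ, hgt_succ, hRget]
        rcases hx : P[m]? with _ | s
        · simpa using ih
        · have hv : Step.val s ≤ Step.val (toD s) := by
            cases s with
            | U => simp [toD]
            | D => simp [toD]
            | C k =>
                have := (hPcat m k hx).1
                unfold toD; simp only [reduceCtorEq, if_neg]
                show -(k : ℤ) ≤ Step.val Step.D
                simp [Step.val]; omega
          simp only [hx, Option.map_some, Option.getD_some]
          omega
  have hRpos : ∀ i, 0 ≤ hgt R i := fun i => le_trans (hPpos i) (hcomp i)
  have hRendpos : 0 ≤ hgt R n := hRpos n
  -- pointwise determination of any candidate at non-catastrophe positions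
  have hpoint : ∀ Q : List Step, Q.length = n → UEquiv P Q →
      ∀ i : ℕ, i < n → (∀ k : ℕ, Q[i]? ≠ some (Step.C k)) → Q[i]? = R[i]? := by
    intro Q hQlen hQU i hi hnoC
    obtain ⟨s, hs⟩ : ∃ s, P[i]? = some s := by
      rw [List.getElem?_eq_getElem (by omega : i < P.length)]; exact ⟨_, rfl⟩
    obtain ⟨t, ht⟩ : ∃ t, Q[i]? = some t := by
      rw [List.getElem?_eq_getElem (by omega : i < Q.length)]; exact ⟨_, rfl⟩
    rw [hRget, hs, ht]
    cases t with
    | U =>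
        have : P[i]? = some Step.U := (hQU i).mpr ht
        rw [hs] at this
        simp only [Option.some.injEq] at this
        subst this; rfl
    | D =>
        have hsU : s ≠ Step.U := by
          rintro rfl
          have := (hQU i).mp hs
          rw [ht] at this; exact Step.noConfusion (Option.some.inj this)
        simp only [Option.map_some, Option.some.injEq]
        unfold toD; rw [if_neg hsU]
    | C k => exact absurd ht (hnoC k)
  -- candidates with no catastrophe equal R
  have hkey0 : ∀ Q : List Step, InE Q → catCount Q = 0 → Q.length = n → UEquiv P Q →
      Q = R := by
    intro Q hQE hQc hQlen hQU
    have hnoC : ∀ (i k : ℕ), Q[i]? ≠ some (Step.C k) := by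
      intro i k hik
      have hmem : Step.C k ∈ Q := by
        rcases List.getElem?_eq_some_iff.mp hik with ⟨h, hh⟩
        exact hh ▸ List.getElem_mem _
      have := (List.countP_eq_zero.mp hQc) _ hmem
      simp [isCatB] at this
    apply List.ext_getElem?
    intro i
    rcases Nat.lt_or_ge i n with hi | hi
    · exact hpoint Q hQlen hQU i hi (hnoC i)
    · rw [List.getElem?_eq_none (by omega), List.getElem?_eq_none (by omega)]
  -- candidates with one final catastrophe
  have hkey1 : ∀ Q : List Step, InE Q → catCount Q = 1 →
      (∃ k, 2 ≤ k ∧ Q.getLast? = some (Step.C k)) → Q.length = n → UEquiv P Q →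
      ∃ k, Q = R.take (n-1) ++ [Step.C k] ∧ (k : ℤ) = hgt R (n-1) ∧ 1 ≤ n := by
    intro Q hQE hQc ⟨k, hk2, hklast⟩ hQlen hQU
    have hQne : Q ≠ [] := by
      intro h; rw [h] at hklast; simp at hklast
    have hn1 : 1 ≤ n := by
      rw [← hQlen]; exact List.length_pos_iff.mpr hQne
    have hlastget : Q[n-1]? = some (Step.C k) := by
      rw [← hQlen] at *
      rwa [List.getLast?_eq_getElem?] at hklast
    -- no catastrophe before the last position
    have hnoC : ∀ i : ℕ, i < n - 1 → ∀ k' : ℕ, Q[i]? ≠ some (Step.C k') := by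
      intro i hi k' hik
      have hsplit : Q = Q.take (n-1) ++ Q.drop (n-1) := (List.take_append_drop _ _).symm
      have hdrop : Q.drop (n-1) = [Step.C k] := by
        have hlen : (Q.drop (n-1)).length = 1 := by
          rw [List.length_drop, hQlen]; omega
        have hget : (Q.drop (n-1))[0]? = some (Step.C k) := by
          rw [List.getElem?_drop]; simpa using hlastget
        rcases hd : Q.drop (n-1) with _ | ⟨a, l⟩
        · rw [hd] at hlen; simp at hlen
        · rw [hd] at hlen hget
          simp at hlen hget
          rw [hget, hlen]
      have hcnt : List.countP isCatB (Q.take (n-1)) = 0 := by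
        have h : List.countP isCatB (Q.take (n-1) ++ Q.drop (n-1)) = 1 := by
          rw [List.take_append_drop]; exact hQc
        rw [List.countP_append, hdrop] at h
        have h1 : List.countP isCatB [Step.C k] = 1 := rfl
        rw [h1] at h
        omega
      have hmem : Step.C k' ∈ Q.take (n-1) := by
        have htk : (Q.take (n-1))[i]? = some (Step.C k') := by
          rw [List.getElem?_take_of_lt hi]; exact hik
        rcases List.getElem?_eq_some_iff.mp htk with ⟨h, hh⟩
        exact hh ▸ List.getElem_mem _
      have := (List.countP_eq_zero.mp hcnt) _ hmem
      simp [isCatB] at this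
    refine ⟨k, ?_, ?_, hn1⟩
    · apply List.ext_getElem?
      intro i
      rcases Nat.lt_or_ge i (n-1) with hi | hi
      · rw [List.getElem?_append_left (by rw [List.length_take]; omega),
          List.getElem?_take_of_lt hi]
        exact hpoint Q hQlen hQU i (by omega) (hnoC i hi)
      · rcases Nat.lt_or_ge i n with hi2 | hi2
        · have hieq : i = n - 1 := by omega
          subst hieq
          have hlt : R.take (n-1) ++ [Step.C k] = R.take (n-1) ++ [Step.C k] := rfl
          rw [List.getElem?_append_right (by rw [List.length_take]; omega)]
          rw [List.length_take, min_eq_left (by omega)]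
          simpa using hlastget
        · rw [List.getElem?_eq_none (by omega),
            List.getElem?_eq_none (by simp [List.length_take]; omega)]
    · -- height condition at the catastrophe
      have hcat := (hQE.2.2 (n-1) k hlastget).2
      have : hgt Q (n-1) = hgt R (n-1) := by
        apply hgt_congr
        intro j hj
        exact hpoint Q hQlen hQU j (by omega) (hnoC j hj)
      omega
  -- last step of P is not U (when P nonempty)
  have hlastP : ∀ s, 1 ≤ n → P[n-1]? = some s → s ≠ Step.U := by
    intro s h1 hs hsu
    subst hsu
    have ha := hgt_succ P (n-1)
    rw [hs] at ha
    have h2 : n - 1 + 1 = n := by omega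
    rw [h2] at ha
    have hb := hPpos (n-1)
    simp [Step.val] at ha
    omega
  by_cases hzero : hgt R n = 0
  · -- the representative is R itself
    refine ⟨R, ⟨⟨⟨hRpos, by rwa [hRlen], fun i k hik => absurd hik (hRnoC i k)⟩,
      Or.inl hRcount⟩, hRlen, hUR⟩, ?_⟩
    rintro Q ⟨⟨hQE, hQalt⟩, hQlen, hQU⟩
    rcases hQalt with hQc | ⟨hQc, hlast⟩
    · exact hkey0 Q hQE hQc hQlen hQU
    · exfalso
      obtain ⟨k, hQeq, hkval, hn1⟩ := hkey1 Q hQE hQc hlast hQlen hQU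
      obtain ⟨k', hk'2, hk'last⟩ := hlast
      obtain ⟨s, hs⟩ : ∃ s, P[n-1]? = some s := by
        rw [List.getElem?_eq_getElem (by omega : n-1 < P.length)]; exact ⟨_, rfl⟩
      have hsu : s ≠ Step.U := hlastP s hn1 hs
      have hstep : hgt R n = hgt R (n-1) - 1 := by
        have ht := hgt_succ R (n-1)
        rw [hRget, hs] at ht
        have h2 : n - 1 + 1 = n := by omega
        rw [h2] at ht
        rw [ht]
        have hv : Step.val (toD s) = -1 := by simp [toD, Step.val, hsu]
        simp only [Option.map_some, Option.getD_some, hv]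
        ring
      have hlastget : Q[n-1]? = some (Step.C k') := by
        rw [List.getLast?_eq_getElem?, hQlen] at hk'last
        exact hk'last
      have hlen' : (R.take (n-1)).length = n - 1 := by
        rw [List.length_take, hRlen, min_eq_left (by omega)]
      have h2' : Q[n-1]? = some (Step.C k) := by
        rw [hQeq, List.getElem?_append_right hlen'.le, hlen']
        simp
      rw [hlastget] at h2'
      have hkk : k' = k := by
        have := Option.some.inj h2'; injection this
      subst hkk
      omega
  · -- the representative ends with a catastrophe
    have hn1 : 1 ≤ n := by
      rcases Nat.eq_zero_or_pos n with h | h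
      · exfalso; apply hzero; rw [h, hgt_zero]
      · exact h
    obtain ⟨s, hs⟩ : ∃ s, P[n-1]? = some s := by
      rw [List.getElem?_eq_getElem (by omega : n-1 < P.length)]; exact ⟨_, rfl⟩
    have hsu : s ≠ Step.U := hlastP s hn1 hs
    have hstep : hgt R n = hgt R (n-1) - 1 := by
      have := hgt_succ R (n-1)
      rw [hRget, hs] at this
      have h2 : n - 1 + 1 = n := by omega
      rw [h2] at this
      rw [this]
      have hv : Step.val (toD s) = -1 := by simp [toD, Step.val, hsu]
      simp only [Option.map_some, Option.getD_some, hv]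
      ring
    set k₀ : ℕ := (hgt R (n-1)).toNat with hk₀
    have hk₀val : (k₀ : ℤ) = hgt R (n-1) := Int.toNat_of_nonneg (hRpos (n-1))
    have hk₀2 : 2 ≤ k₀ := by
      have h1 : 1 ≤ hgt R n := lt_of_le_of_ne hRendpos (Ne.symm hzero)
      omega
    set Q₀ : List Step := R.take (n-1) ++ [Step.C k₀] with hQ₀
    have hQ₀len : Q₀.length = n := by
      rw [hQ₀, List.length_append, List.length_take]
      simp; omega
    have hQ₀get_lt : ∀ i : ℕ, i < n - 1 → Q₀[i]? = R[i]? := by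
      intro i hi
      rw [hQ₀, List.getElem?_append_left (by rw [List.length_take]; omega),
        List.getElem?_take_of_lt hi]
    have hQ₀get_last : Q₀[n-1]? = some (Step.C k₀) := by
      rw [hQ₀, List.getElem?_append_right (by rw [List.length_take]; omega),
        List.length_take, min_eq_left (by omega)]
      simp
    have hQ₀get_ge : ∀ i : ℕ, n ≤ i → Q₀[i]? = none := by
      intro i hi
      exact List.getElem?_eq_none (by omega)
    have hQ₀hgt : ∀ i, i ≤ n - 1 → hgt Q₀ i = hgt R i := by
      intro i hi
      exact hgt_congr _ _ _ (fun j hj => hQ₀get_lt j (by omega))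
    have hQ₀hgt_n : hgt Q₀ n = 0 := by
      have := hgt_succ Q₀ (n-1)
      rw [hQ₀get_last] at this
      have h2 : n - 1 + 1 = n := by omega
      rw [h2] at this
      rw [this, hQ₀hgt (n-1) (le_refl _)]
      simp [Step.val]
      omega
    have hQ₀hgt_ge : ∀ i, n ≤ i → hgt Q₀ i = 0 := by
      intro i hi
      rw [hgt_of_length_le _ _ (by omega), hQ₀len, hQ₀hgt_n]
    have hQ₀E : InE Q₀ := by
      refine ⟨?_, by rw [hQ₀len]; exact hQ₀hgt_n, ?_⟩
      · intro i
        rcases Nat.lt_or_ge i n with hi | hi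
        · rcases Nat.lt_or_ge i (n-1) with hi2 | hi2
          · rw [hgt_congr Q₀ R i (fun j hj => hQ₀get_lt j (by omega))]
            exact hRpos i
          · have : i = n - 1 := by omega
            subst this
            rw [hQ₀hgt _ (le_refl _)]; exact hRpos _
        · rw [hQ₀hgt_ge i hi]
      · intro i k hik
        rcases Nat.lt_or_ge i n with hi | hi
        · rcases Nat.lt_or_ge i (n-1) with hi2 | hi2
          · rw [hQ₀get_lt i hi2] at hik
            exact absurd hik (hRnoC i k)
          · have hieq : i = n - 1 := by omega
            subst hieq
            rw [hQ₀get_last] at hik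
            have hkk0 : k₀ = k := by
              injection Option.some.inj hik
            subst hkk0
            refine ⟨hk₀2, ?_⟩
            rw [hQ₀hgt _ (le_refl _)]
            omega
        · rw [hQ₀get_ge i hi] at hik; simp at hik
    have hQ₀count : catCount Q₀ = 1 := by
      rw [hQ₀, catCount, List.countP_append]
      have h1 : (R.take (n-1)).countP isCatB = 0 := by
        rw [List.countP_eq_zero]
        intro a ha
        have := (List.countP_eq_zero.mp hRcount) a (List.mem_of_mem_take ha)
        exact this
      rw [h1]
      simp [isCatB]
    have hQ₀U : UEquiv P Q₀ := by
      intro i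
      rcases Nat.lt_or_ge i n with hi | hi
      · rcases Nat.lt_or_ge i (n-1) with hi2 | hi2
        · rw [hQ₀get_lt i hi2]; exact hUR i
        · have hieq : i = n - 1 := by omega
          subst hieq
          rw [hQ₀get_last, hs]
          constructor
          · intro h; exact absurd (Option.some.inj h) hsu
          · intro h; exact Step.noConfusion (Option.some.inj h)
      · have h1 : P[i]? = none := List.getElem?_eq_none (by omega)
        rw [hQ₀get_ge i hi, h1]
    refine ⟨Q₀, ⟨⟨hQ₀E, Or.inr ⟨hQ₀count, k₀, hk₀2, by rw [hQ₀]; exact List.getLast?_concat⟩⟩,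
      hQ₀len, hQ₀U⟩, ?_⟩
    rintro Q ⟨⟨hQE, hQalt⟩, hQlen, hQU⟩
    rcases hQalt with hQc | ⟨hQc, hlast⟩
    · exfalso
      have := hkey0 Q hQE hQc hQlen hQU
      subst this
      have := hQE.2.1
      rw [hQlen] at this
      exact hzero this
    · obtain ⟨k, hQeq, hkval, _⟩ := hkey1 Q hQE hQc hlast hQlen hQU
      have : k = k₀ := by omega
      rw [hQeq, this]
end

section
/- For every integer n ≥ 2, the number of U-equivalence classes of paths of length n in ℰ equals the binomial coefficient C(n−1, ⌊(n−2)/2⌋). -/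
/-- The number of equivalence classes, for the equivalence `E`, of paths of
length `n` in ℰ. -/
noncomputable def nClasses (E : List Step → List Step → Prop) (n : ℕ) : ℕ :=
  Nat.card (Quot (fun P Q : {P : List Step // InE P ∧ P.length = n} => E P.1 Q.1))

/-! ### Auxiliary development -/

section Aux

/-- value of a boolean letter: `true ↦ 1`, `false ↦ -1`. -/
def bval (b : Bool) : ℤ := if b then 1 else -1

/-- total value of a boolean word. -/
def tot (l : List Bool) : ℤ := (l.map bval).sum

/-- all suffixes have nonnegative total. -/
def good (l : List Bool) : Prop := ∀ i, 0 ≤ tot (l.drop i)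

lemma tot_nil : tot [] = 0 := rfl

lemma tot_cons (b : Bool) (l : List Bool) : tot (b :: l) = bval b + tot l := by
  simp [tot]

lemma tot_reverse (l : List Bool) : tot l.reverse = tot l := by
  simp [tot, List.map_reverse, List.sum_reverse]

lemma tot_le_length (l : List Bool) : tot l ≤ l.length := by
  induction l with
  | nil => simp [tot]
  | cons b t ih =>
    rw [tot_cons]
    have hb : bval b ≤ 1 := by cases b <;> simp [bval]
    simp only [List.length_cons]
    push_cast
    omega

lemma good_nil : good [] := by
  intro i; simp [tot]

lemma good_cons {b : Bool} {l : List Bool} :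
    good (b :: l) ↔ 0 ≤ tot (b :: l) ∧ good l := by
  constructor
  · intro h
    exact ⟨h 0, fun i => by simpa using h (i + 1)⟩
  · rintro ⟨h0, h⟩ i
    match i with
    | 0 => exact h0
    | i + 1 => simpa using h i

/-- count of good words of length `N` with total `h`, defined by the
path recurrence. -/
def S : ℕ → ℕ → ℕ
  | 0, 0 => 1
  | 0, _ + 1 => 0
  | N + 1, 0 => S N 1
  | N + 1, h + 1 => S N h + S N (h + 2)

/-- closed form: ballot numbers. -/
def F (N h : ℕ) : ℤ :=
  if (N + h) % 2 = 0 then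
    (N.choose ((N + h) / 2) : ℤ) - (N.choose ((N + h) / 2 + 1) : ℤ)
  else 0

lemma F_step (N h : ℕ) : F N h + F N (h + 2) = F (N + 1) (h + 1) := by
  unfold F
  rcases Nat.even_or_odd (N + h) with he | ho
  · have h1 : (N + h) % 2 = 0 := Nat.even_iff.mp he
    have h2 : (N + (h + 2)) % 2 = 0 := by omega
    have h3 : (N + 1 + (h + 1)) % 2 = 0 := by omega
    set k := (N + h) / 2 with hk
    have e2 : (N + (h + 2)) / 2 = k + 1 := by omega
    have e3 : (N + 1 + (h + 1)) / 2 = k + 1 := by omega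
    rw [if_pos h1, if_pos h2, if_pos h3, e2, e3]
    have p1 : (N + 1).choose (k + 1) = N.choose k + N.choose (k + 1) :=
      Nat.choose_succ_succ N k
    have p2 : (N + 1).choose (k + 2) = N.choose (k + 1) + N.choose (k + 2) :=
      Nat.choose_succ_succ N (k + 1)
    push_cast [p1, p2]
    ring
  · have h1 : (N + h) % 2 = 1 := Nat.odd_iff.mp ho
    have h2 : (N + (h + 2)) % 2 = 1 := by omega
    have h3 : (N + 1 + (h + 1)) % 2 = 1 := by omega
    rw [if_neg (by omega), if_neg (by omega), if_neg (by omega)]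
    ring

lemma F_zero (N : ℕ) : F N 1 = F (N + 1) 0 := by
  unfold F
  rcases Nat.even_or_odd (N + 1) with he | ho
  · have h1 : (N + 1) % 2 = 0 := Nat.even_iff.mp he
    obtain ⟨k1, hk1⟩ : ∃ k1, (N + 1) / 2 = k1 + 1 := ⟨(N + 1) / 2 - 1, by omega⟩
    rw [if_pos (by omega), if_pos (by omega), show (N + 1 + 0) / 2 = k1 + 1 by omega]
    have p1 : ((N + 1).choose (k1 + 1) : ℤ) = N.choose k1 + N.choose (k1 + 1) := by
      exact_mod_cast Nat.choose_succ_succ N k1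
    have p2 : ((N + 1).choose (k1 + 1 + 1) : ℤ) = N.choose (k1 + 1) + N.choose (k1 + 1 + 1) := by
      exact_mod_cast Nat.choose_succ_succ N (k1 + 1)
    have psym : (N.choose k1 : ℤ) = N.choose (k1 + 1) := by
      have hd : N - (k1 + 1) = k1 := by omega
      have := Nat.choose_symm (show k1 + 1 ≤ N by omega)
      rw [hd] at this
      exact_mod_cast this
    rw [p1, p2]
    linarith [psym]
  · have h1 : (N + 1) % 2 = 1 := Nat.odd_iff.mp ho
    rw [if_neg (by omega), if_neg (by omega)]

lemma S_eq_F (N : ℕ) : ∀ h, (S N h : ℤ) = F N h := by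
  induction N with
  | zero =>
    intro h
    match h with
    | 0 => simp [S, F]
    | h + 1 =>
      have : S 0 (h + 1) = 0 := rfl
      rw [this]
      unfold F
      split
      · rw [Nat.choose_eq_zero_of_lt (by omega), Nat.choose_eq_zero_of_lt (by omega)]
        simp
      · simp
  | succ N ih =>
    intro h
    match h with
    | 0 =>
      have : S (N + 1) 0 = S N 1 := rfl
      rw [this, ih 1, F_zero]
    | h + 1 =>
      have : S (N + 1) (h + 1) = S N h + S N (h + 2) := rfl
      rw [this]
      push_cast
      rw [ih h, ih (h + 2), F_step]

lemma pair_sum (f : ℕ → ℤ) (m : ℕ) :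
    ∑ i ∈ Finset.range (2 * m), f i = ∑ j ∈ Finset.range m, (f (2 * j) + f (2 * j + 1)) := by
  induction m with
  | zero => simp
  | succ m ih =>
    rw [show 2 * (m + 1) = (2 * m + 1) + 1 from by ring, Finset.sum_range_succ,
      Finset.sum_range_succ, ih, Finset.sum_range_succ]
    ring

lemma sum_F (N : ℕ) (hN : 1 ≤ N) :
    ∑ h ∈ Finset.range (2 * N), F N (h + 1) = (N.choose ((N - 1) / 2) : ℤ) := by
  rw [pair_sum (fun h => F N (h + 1)) N]
  set a := N / 2 + 1 with ha
  have key : ∀ j, F N (2 * j + 1) + F N (2 * j + 1 + 1)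
      = ((N.choose (a + j) : ℤ) - (N.choose (a + j + 1) : ℤ)) := by
    intro j
    unfold F
    rcases Nat.even_or_odd N with he | ho
    · have h0 : N % 2 = 0 := Nat.even_iff.mp he
      have e2 : (N + (2 * j + 1 + 1)) / 2 = a + j := by omega
      rw [if_neg (by omega), if_pos (by omega), e2]
      ring
    · have h0 : N % 2 = 1 := Nat.odd_iff.mp ho
      have e1 : (N + (2 * j + 1)) / 2 = a + j := by omega
      rw [if_pos (by omega), if_neg (by omega), e1]
      ring
  calc ∑ j ∈ Finset.range N, (F N (2 * j + 1) + F N (2 * j + 1 + 1))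
      = ∑ j ∈ Finset.range N, ((N.choose (a + j) : ℤ) - (N.choose (a + j + 1) : ℤ)) :=
        Finset.sum_congr rfl (fun j _ => key j)
    _ = (N.choose (a + 0) : ℤ) - (N.choose (a + N) : ℤ) :=
        Finset.sum_range_sub' (fun j => (N.choose (a + j) : ℤ)) N
    _ = (N.choose ((N - 1) / 2) : ℤ) := by
        rw [Nat.choose_eq_zero_of_lt (show N < a + N by omega)]
        have : N.choose a = N.choose ((N - 1) / 2) := by
          have h1 : N - a = (N - 1) / 2 := by omega
          rw [← h1]
          exact (Nat.choose_symm (by omega)).symm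
        simp [this]

end Aux

section Counting

/-- good words of length `N` with total `h`. -/
def Egood (N h : ℕ) : Type :=
  {l : List Bool // l.length = N ∧ good l ∧ tot l = (h : ℤ)}

lemma finite_sub {p : List Bool → Prop} {N : ℕ} (hp : ∀ l, p l → l.length = N) :
    Finite {l : List Bool // p l} := by
  have hfin : {l : List Bool | p l}.Finite :=
    (List.finite_length_eq Bool N).subset (fun l hl => hp l hl)
  exact hfin

instance (N h : ℕ) : Finite (Egood N h) :=
  finite_sub (fun l hl => hl.1)

lemma card_Egood (N : ℕ) : ∀ h, Nat.card (Egood N h) = S N h := by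
  induction N with
  | zero =>
    intro h
    match h with
    | 0 =>
      have : Nat.card (Egood 0 0) = 1 := by
        rw [Nat.card_eq_one_iff_unique]
        constructor
        · constructor
          rintro ⟨l, hl, -⟩ ⟨l', hl', -⟩
          apply Subtype.ext
          simp only
          rw [List.length_eq_zero_iff.mp hl, List.length_eq_zero_iff.mp hl']
        · exact ⟨⟨[], rfl, good_nil, rfl⟩⟩
      rw [this]; rfl
    | h + 1 =>
      have : IsEmpty (Egood 0 (h + 1)) := by
        constructor
        rintro ⟨l, hl, -, ht⟩
        rw [List.length_eq_zero_iff.mp hl] at ht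
        simp [tot] at ht
        omega
      rw [Nat.card_of_isEmpty]; rfl
  | succ N ih =>
    intro h
    match h with
    | 0 =>
      have hb : Function.Bijective
          (fun t : Egood N 1 => (⟨false :: t.1, by
            obtain ⟨t, htl, htg, htt⟩ := t
            refine ⟨by simp [htl], ?_, ?_⟩
            · rw [good_cons]
              refine ⟨?_, htg⟩
              rw [tot_cons, htt]; simp [bval]
            · rw [tot_cons, htt]; simp [bval]⟩ : Egood (N + 1) 0)) := by
        constructor
        · rintro ⟨t, ht⟩ ⟨t', ht'⟩ heq
          apply Subtype.ext
          simpa using congrArg Subtype.val heq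
        · rintro ⟨l, hl, hg, ht⟩
          match l with
          | [] => simp at hl
          | b :: t =>
            have hgt' : good t := (good_cons.mp hg).2
            have htt : bval b + tot t = 0 := by rw [← tot_cons]; exact_mod_cast ht
            have hb : b = false := by
              cases b
              · rfl
              · exfalso
                have := hgt' 0
                simp only [List.drop_zero] at this
                simp [bval] at htt
                omega
            subst hb
            refine ⟨⟨t, by simpa using hl, hgt', ?_⟩, rfl⟩
            simp [bval] at htt
            push_cast
            omega
      exact (Nat.card_eq_of_bijective _ hb).symm.trans (ih 1)
    | h + 1 =>
      have hb : Function.Bijective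
          (fun x : Egood N h ⊕ Egood N (h + 2) =>
            (match x with
             | Sum.inl t => (⟨true :: t.1, by
                obtain ⟨t, htl, htg, htt⟩ := t
                refine ⟨by simp [htl], ?_, ?_⟩
                · rw [good_cons]
                  refine ⟨?_, htg⟩
                  rw [tot_cons, htt]; simp [bval]; positivity
                · rw [tot_cons, htt]; simp [bval]; push_cast; ring⟩ : Egood (N + 1) (h + 1))
             | Sum.inr t => (⟨false :: t.1, by
                obtain ⟨t, htl, htg, htt⟩ := t
                refine ⟨by simp [htl], ?_, ?_⟩
                · rw [good_cons]
                  refine ⟨?_, htg⟩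
                  rw [tot_cons, htt]; simp [bval]; push_cast; omega
                · rw [tot_cons, htt]; simp [bval]; push_cast; ring⟩ : Egood (N + 1) (h + 1)))) := by
        constructor
        · rintro (⟨t, ht⟩ | ⟨t, ht⟩) (⟨t', ht'⟩ | ⟨t', ht'⟩) heq
          · have hv : (true : Bool) :: t = true :: t' := congrArg Subtype.val heq
            simp only [List.cons.injEq] at hv
            exact congrArg Sum.inl (Subtype.ext hv.2)
          · exact absurd (congrArg Subtype.val heq : (true : Bool) :: t = false :: t') (by simp)
          · exact absurd (congrArg Subtype.val heq : (false : Bool) :: t = true :: t') (by simp)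
          · have hv : (false : Bool) :: t = false :: t' := congrArg Subtype.val heq
            simp only [List.cons.injEq] at hv
            exact congrArg Sum.inr (Subtype.ext hv.2)
        · rintro ⟨l, hl, hg, ht⟩
          match l with
          | [] => simp at hl
          | b :: t =>
            have hgt' : good t := (good_cons.mp hg).2
            have htt : bval b + tot t = ((h : ℤ) + 1) := by
              rw [← tot_cons]; exact_mod_cast ht
            cases b
            · refine ⟨Sum.inr ⟨t, by simpa using hl, hgt', ?_⟩, ?_⟩
              · simp [bval] at htt; push_cast; omega
              · apply Subtype.ext; rfl
            · refine ⟨Sum.inl ⟨t, by simpa using hl, hgt', ?_⟩, ?_⟩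
              · simp [bval] at htt; push_cast; omega
              · apply Subtype.ext; rfl
      calc Nat.card (Egood (N + 1) (h + 1))
          = Nat.card (Egood N h ⊕ Egood N (h + 2)) := (Nat.card_eq_of_bijective _ hb).symm
        _ = Nat.card (Egood N h) + Nat.card (Egood N (h + 2)) := Nat.card_sum
        _ = S N h + S N (h + 2) := by rw [ih h, ih (h + 2)]

/-- good words of length `N` with positive total. -/
def Rtype (N : ℕ) : Type :=
  {l : List Bool // l.length = N ∧ good l ∧ 1 ≤ tot l}

instance (N : ℕ) : Finite (Rtype N) :=
  finite_sub (fun l hl => hl.1)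

lemma card_Rtype (N : ℕ) :
    Nat.card (Rtype N) = ∑ h ∈ Finset.range (2 * N), S N (h + 1) := by
  have hb : Function.Bijective
      (fun x : (Σ h : Fin (2 * N), Egood N (h.1 + 1)) =>
        (⟨x.2.1, x.2.2.1, x.2.2.2.1, by rw [x.2.2.2.2]; push_cast; omega⟩ : Rtype N)) := by
    constructor
    · rintro ⟨⟨h, hh⟩, l, hl⟩ ⟨⟨h', hh'⟩, l', hl'⟩ heq
      have hll : l = l' := congrArg Subtype.val heq
      subst hll
      have hhh : h = h' := by
        have e2 := hl.2.2.symm.trans hl'.2.2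
        have e3 : h + 1 = h' + 1 := by exact_mod_cast e2
        omega
      subst hhh
      rfl
    · rintro ⟨l, hl, hg, ht⟩
      have hle : tot l ≤ N := by
        have := tot_le_length l
        rw [hl] at this
        exact this
      have hN : 1 ≤ N := by
        by_contra hc
        have : N = 0 := by omega
        subst this
        rw [List.length_eq_zero_iff.mp hl] at ht
        simp [tot] at ht
      refine ⟨⟨⟨(tot l).toNat - 1, by omega⟩, ⟨l, hl, hg, by push_cast; omega⟩⟩, rfl⟩
  letI : ∀ h : Fin (2 * N), Fintype (Egood N (h.1 + 1)) := fun h => Fintype.ofFinite _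
  calc Nat.card (Rtype N)
      = Nat.card (Σ h : Fin (2 * N), Egood N (h.1 + 1)) := (Nat.card_eq_of_bijective _ hb).symm
    _ = ∑ h ∈ Finset.range (2 * N), S N (h + 1) := by
        rw [Nat.card_eq_fintype_card, Fintype.card_sigma,
          Finset.sum_range (fun h => S N (h + 1))]
        apply Finset.sum_congr rfl
        intro i _
        rw [← Nat.card_eq_fintype_card, card_Egood]

end Counting

section Paths

/-- Test for an up-step. -/
def isU : Step → Bool
  | .U => true
  | _ => false

/-- The reversed `U`-indicator word of a path. -/
def gmap (P : List Step) : List Bool := (P.map isU).reverse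

lemma isU_eq_true {s : Step} : isU s = true ↔ s = Step.U := by
  cases s <;> simp [isU]

lemma gmap_length (P : List Step) : (gmap P).length = P.length := by
  simp [gmap]

lemma hgt_succ_s1 {P : List Step} {i : ℕ} {s : Step} (h : P[i]? = some s) :
    hgt P (i + 1) = hgt P i + s.val := by
  simp [hgt, List.take_succ, h]

/-- Paths of length `n` in ℰ. -/
abbrev Esub (n : ℕ) : Type := {P : List Step // InE P ∧ P.length = n}

/-- good words of length `n` starting (in reversed reading: ending) with `false`. -/
def Ctype (n : ℕ) : Type :=
  {w : List Bool // w.length = n ∧ good w ∧ w.head? = some false}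

instance (n : ℕ) : Finite (Ctype n) :=
  finite_sub (fun l hl => hl.1)

lemma gmap_mem {n : ℕ} (hn : 1 ≤ n) (P : List Step) (hP : InE P) (hlen : P.length = n) :
    (gmap P).length = n ∧ good (gmap P) ∧ (gmap P).head? = some false := by
  obtain ⟨hpos, hend, hcat⟩ := hP
  refine ⟨by rw [gmap_length, hlen], ?_, ?_⟩
  · -- goodness
    intro i
    rw [gmap, List.drop_reverse, tot_reverse]
    set j := (P.map isU).length - i with hj
    rw [← List.map_take]
    have key : ((P.take j).map Step.val).sum ≤ (((P.take j).map isU).map bval).sum := by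
      rw [List.map_map]
      apply List.sum_le_sum
      intro s hs
      have hsP : s ∈ P := List.mem_of_mem_take hs
      obtain ⟨idx, hidx⟩ := List.mem_iff_getElem?.mp hsP
      match s with
      | .U => simp [isU, bval, Step.val]
      | .D => simp [isU, bval, Step.val]
      | .C k =>
        have h2 : 2 ≤ k := (hcat idx k hidx).1
        show (Step.C k).val ≤ (bval ∘ isU) (Step.C k)
        simp only [Step.val, Function.comp_apply, isU, bval, if_neg Bool.false_ne_true]
        omega
    calc (0 : ℤ) ≤ hgt P j := hpos j
      _ = ((P.take j).map Step.val).sum := rfl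
      _ ≤ tot ((P.take j).map isU) := key
  · -- ends with a non-up step
    have hn' : n - 1 < P.length := by omega
    have hs : P[n-1]? = some (P[n-1]'hn') := List.getElem?_eq_getElem hn'
    have hnotU : ∀ s : Step, P[n-1]? = some s → isU s = false := by
      intro s hss
      match s with
      | .U =>
        exfalso
        have hstep := hgt_succ_s1 hss
        rw [show n - 1 + 1 = n by omega] at hstep
        rw [hlen] at hend
        have hp := hpos (n - 1)
        rw [hend] at hstep
        simp only [Step.val] at hstep
        omega
      | .D => rfl
      | .C k => rfl
    rw [gmap, List.head?_reverse, List.getLast?_eq_getElem?, List.getElem?_map]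
    have hl' : (P.map isU).length - 1 = n - 1 := by simp [hlen]
    rw [hl', hs]
    simp [hnotU _ hs]

/-- step from a letter. -/
def stp (b : Bool) : Step := if b then Step.U else Step.D

lemma val_stp (b : Bool) : (stp b).val = bval b := by cases b <;> rfl

lemma isU_stp (b : Bool) : isU (stp b) = b := by cases b <;> rfl

lemma isU_cfin (m : ℕ) : isU (cfin m) = false := by
  unfold cfin; split <;> rfl

lemma val_cfin (m : ℕ) : (cfin m).val = -(m : ℤ) := by
  unfold cfin
  split
  · rename_i h; subst h; rfl
  · rfl

lemma map_val_stp (l : List Bool) : (l.map stp).map Step.val = l.map bval := by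
  rw [List.map_map]
  exact List.map_congr_left (fun b _ => val_stp b)

lemma construct {n : ℕ} (hn : 1 ≤ n) (t : List Bool) (hlen : t.length = n - 1)
    (hg : good t) (ht : 1 ≤ tot t) :
    ∃ P : List Step, (InE P ∧ P.length = n) ∧ gmap P = false :: t := by
  set m := (tot t).toNat with hmdef
  have hm : (m : ℤ) = tot t := Int.toNat_of_nonneg (by omega)
  set L := t.reverse.map stp with hL
  have hLlen : L.length = n - 1 := by simp [hL, hlen]
  set P := L ++ [cfin m] with hP
  have hPlen : P.length = n := by
    simp only [hP, List.length_append, hLlen, List.length_cons, List.length_nil]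
    omega
  -- partial height computation
  have hsum : ∀ j, j ≤ n - 1 → hgt P j = tot (t.drop (t.length - j)) := by
    intro j hjn
    have h1 : P.take j = L.take j :=
      List.take_append_of_le_length (by omega)
    have h2 : L.take j = (t.reverse.take j).map stp := by
      rw [hL, ← List.map_take]
    rw [hgt, h1, h2, map_val_stp, List.take_reverse, ← tot_reverse]
    rfl
  have hfull : ∀ j, n ≤ j → hgt P j = 0 := by
    intro j hj
    have h1 : P.take j = P := List.take_of_length_le (by omega)
    rw [hgt, h1, hP, List.map_append, List.sum_append]
    simp only [List.map_cons, List.map_nil, List.sum_cons, List.sum_nil]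
    rw [map_val_stp, val_cfin]
    have : tot t.reverse = tot t := tot_reverse t
    simp only [tot] at this
    rw [this]
    have hm' : (m : ℤ) = (List.map bval t).sum := hm
    omega
  have hzero : hgt P (n - 1) = tot t := by
    rw [hsum (n - 1) le_rfl]
    simp [hlen]
  refine ⟨P, ⟨⟨?_, ?_, ?_⟩, hPlen⟩, ?_⟩
  · intro i
    rcases le_or_gt i (n - 1) with hi | hi
    · rw [hsum i hi]
      exact hg (t.length - i)
    · rw [hfull i (by omega)]
  · rw [hPlen, hfull n le_rfl]
  · intro i k hik
    rcases lt_trichotomy i (n - 1) with hi | hi | hi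
    · exfalso
      rw [hP, List.getElem?_append_left (by omega)] at hik
      rw [hL, List.getElem?_map] at hik
      match h' : (t.reverse)[i]? with
      | none => rw [h'] at hik; simp at hik
      | some b =>
        rw [h'] at hik
        simp only [Option.map_some] at hik
        have := Option.some.inj hik
        cases b <;> simp [stp] at this
    · subst hi
      have : P[n-1]? = some (cfin m) := by
        rw [hP, ← hLlen, List.getElem?_concat_length]
      rw [this] at hik
      have hck := Option.some.inj hik
      unfold cfin at hck
      split at hck
      · exact absurd hck (by simp)
      · rename_i hm1
        have hkm : k = m := (Step.C.injEq _ _).mp hck.symm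
        subst hkm
        refine ⟨by omega, ?_⟩
        rw [hzero, hm]
    · exfalso
      rw [List.getElem?_eq_none (by omega)] at hik
      simp at hik
  · rw [gmap, hP, List.map_append, hL, List.map_map]
    have h1 : t.reverse.map (isU ∘ stp) = t.reverse :=
      (List.map_congr_left (g := id) (fun b _ => isU_stp b)).trans (List.map_id _)
    rw [h1]
    simp [isU_cfin]

end Paths

section Glue

lemma isU_eq_false {s : Step} : isU s = false ↔ s ≠ Step.U := by
  cases s <;> simp [isU]

lemma getElem?_isU_iff (P : List Step) (i : ℕ) :
    (P.map isU)[i]? = some true ↔ P[i]? = some Step.U := by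
  rw [List.getElem?_map]
  match h : P[i]? with
  | none => simp
  | some s => simp [isU_eq_true]

lemma uequiv_iff {n : ℕ} (P Q : {P : List Step // InE P ∧ P.length = n}) :
    UEquiv P.1 Q.1 ↔ gmap P.1 = gmap Q.1 := by
  constructor
  · intro h
    unfold gmap
    congr 1
    apply List.ext_getElem?
    intro i
    rcases lt_or_ge i n with hi | hi
    · have hp : i < P.1.length := by rw [P.2.2]; exact hi
      have hq : i < Q.1.length := by rw [Q.2.2]; exact hi
      have hiff := h i
      rw [List.getElem?_eq_getElem hp, List.getElem?_eq_getElem hq] at hiff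
      simp only [Option.some.injEq] at hiff
      rw [List.getElem?_map, List.getElem?_map, List.getElem?_eq_getElem hp,
        List.getElem?_eq_getElem hq]
      simp only [Option.map_some]
      congr 1
      by_cases hA : P.1[i] = Step.U
      · rw [hA, hiff.mp hA]
      · have hB : ¬ Q.1[i] = Step.U := fun hB => hA (hiff.mpr hB)
        rw [isU_eq_false.mpr hA, isU_eq_false.mpr hB]
    · rw [List.getElem?_eq_none (by simp [P.2.2]; omega),
        List.getElem?_eq_none (by simp [Q.2.2]; omega)]
  · intro h i
    have hmap : P.1.map isU = Q.1.map isU := by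
      have := congrArg List.reverse h
      simpa [gmap] using this
    rw [← getElem?_isU_iff, ← getElem?_isU_iff, hmap]

lemma card_quot {α β : Type*} (r : α → α → Prop) (f : α → β)
    (hr : ∀ a b, r a b ↔ f a = f b) (g : β → Prop)
    (hmem : ∀ a, g (f a)) (hsurj : ∀ b, g b → ∃ a, f a = b) :
    Nat.card (Quot r) = Nat.card {b : β // g b} := by
  apply Nat.card_eq_of_bijective (Quot.lift (fun a => (⟨f a, hmem a⟩ : {b // g b}))
    (fun a b hab => Subtype.ext ((hr a b).1 hab)))
  constructor
  · intro x y
    induction x using Quot.ind with | _ a =>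
    induction y using Quot.ind with | _ b =>
    intro hxy
    exact Quot.sound ((hr a b).2 (congrArg Subtype.val hxy))
  · rintro ⟨b, hb⟩
    obtain ⟨a, rfl⟩ := hsurj b hb
    exact ⟨Quot.mk r a, rfl⟩

lemma ctype_elim {n : ℕ} (w : List Bool) (hw : w.length = n ∧ good w ∧ w.head? = some false) :
    ∃ t : List Bool, w = false :: t ∧ t.length = n - 1 ∧ good t ∧ 1 ≤ tot t := by
  obtain ⟨hwl, hwg, hwh⟩ := hw
  match w with
  | [] => simp at hwh
  | true :: t => simp at hwh
  | false :: t =>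
    refine ⟨t, rfl, by simp at hwl; omega, (good_cons.mp hwg).2, ?_⟩
    have h0 := hwg 0
    simp only [List.drop_zero] at h0
    rw [tot_cons] at h0
    simp only [bval, if_neg Bool.false_ne_true] at h0
    omega

end Glue

/-- The number of U-equivalence classes of paths of length `n ≥ 2` in ℰ is
`C(n-1, ⌊(n-2)/2⌋)`. -/
theorem count_UEquiv_classes (n : ℕ) (hn : 2 ≤ n) :
    nClasses UEquiv n = Nat.choose (n - 1) ((n - 2) / 2) := by
  have hn1 : 1 ≤ n := by omega
  have step1 : nClasses UEquiv n = Nat.card (Ctype n) := by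
    unfold nClasses
    apply card_quot _ (fun P : {P : List Step // InE P ∧ P.length = n} => gmap P.1)
      (fun P Q => uequiv_iff P Q)
      (fun w => w.length = n ∧ good w ∧ w.head? = some false)
      (fun P => gmap_mem hn1 P.1 P.2.1 P.2.2)
    · intro w hw
      obtain ⟨t, rfl, htl, htg, htt⟩ := ctype_elim w hw
      obtain ⟨P, hPE, hPg⟩ := construct hn1 t htl htg htt
      exact ⟨⟨P, hPE⟩, hPg⟩
  have step2 : Nat.card (Ctype n) = Nat.card (Rtype (n - 1)) := by
    symm
    apply Nat.card_eq_of_bijective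
      (fun t : Rtype (n - 1) => (⟨false :: t.1, by
        obtain ⟨t, htl, htg, htt⟩ := t
        refine ⟨by simp [htl]; omega, ?_, rfl⟩
        rw [good_cons]
        refine ⟨?_, htg⟩
        rw [tot_cons]
        simp only [bval, if_neg Bool.false_ne_true]
        omega⟩ : Ctype n))
    constructor
    · rintro ⟨t, ht⟩ ⟨t', ht'⟩ heq
      have hv : (false : Bool) :: t = false :: t' := congrArg Subtype.val heq
      simp only [List.cons.injEq] at hv
      exact Subtype.ext hv.2
    · rintro ⟨w, hw⟩
      obtain ⟨t, rfl, htl, htg, htt⟩ := ctype_elim w hw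
      exact ⟨⟨t, htl, htg, htt⟩, rfl⟩
  have step3 : Nat.card (Rtype (n - 1)) = (n - 1).choose ((n - 2) / 2) := by
    rw [card_Rtype]
    have hcast : ((∑ h ∈ Finset.range (2 * (n - 1)), S (n - 1) (h + 1) : ℕ) : ℤ)
        = (((n - 1).choose ((n - 1 - 1) / 2) : ℕ) : ℤ) := by
      push_cast [S_eq_F]
      exact sum_F (n - 1) (by omega)
    rw [show n - 1 - 1 = n - 2 from by omega] at hcast
    exact_mod_cast hcast
  rw [step1, step2, step3]
end

section
/- Let ℱ be the set of paths in ℰ of the form (i) (UD)^k for some k ≥ 0, or (ii) (UD)^{ℓ_0}U^{k_1}α_1U^{k_2}α_2⋯U^{k_r}α_r where r ≥ 1, ℓ_0 ≥ 0, k_i ≥ 2 for 1 ≤ i ≤ r, each α_i with 1 ≤ i ≤ r−1 is either (DU)^kD or (DU)^kDD for some k ≥ 0, and α_r is either (DU)^kC_s or (DU)^kDC_s for some k ≥ 0, where s ≥ 1 is such that the path ends on the x-axis (with the convention C_1 = D). Then for every path P ∈ ℰ there exists exactly one path Q ∈ ℱ with |Q| = |P| such that P and Q are UU-equivalent. In other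 words, ℱ is a complete set of representatives of the UU-equivalence classes of ℰ. -/
/-- Two paths are `UU`-equivalent when the occurrences of the pattern `UU`
appear at the same positions in both paths. -/
def UUEquiv (P Q : List Step) : Prop :=
  ∀ i : ℕ, (P[i]? = some Step.U ∧ P[i + 1]? = some Step.U) ↔
    (Q[i]? = some Step.U ∧ Q[i + 1]? = some Step.U)

/-- Membership in ℱ : either `(UD)^k`, or
`(UD)^{ℓ_0} U^{k_1} α_1 U^{k_2} α_2 ⋯ U^{k_r} α_r` where `r ≥ 1`, all `k_i ≥ 2`,
each `α_i` (`1 ≤ i ≤ r-1`) is `(DU)^k D` or `(DU)^k DD` for some `k ≥ 0`, and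
`α_r` is `(DU)^k C_s` or `(DU)^k D C_s` for some `k ≥ 0` and `s ≥ 1` (with the
convention `C_1 = D`). The middle blocks are encoded by a list of triples
`(kᵢ, k, b)` where `b` tells whether `α_i` ends with one or two `D`-steps. -/
def InF (P : List Step) : Prop :=
  (∃ k, P = UDpow k) ∨
  ∃ (l0 : ℕ) (mids : List (ℕ × ℕ × Bool)) (kr m s : ℕ) (b : Bool),
    (∀ t ∈ mids, 2 ≤ t.1) ∧ 2 ≤ kr ∧ 1 ≤ s ∧
    P = UDpow l0 ++
      (mids.map (fun t => Upow t.1 ++ DUpow t.2.1 ++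
        (if t.2.2 then [Step.D, Step.D] else [Step.D]))).flatten ++
      Upow kr ++ DUpow m ++ (if b then [Step.D, cfin s] else [cfin s])

namespace CatProof

/-- UU-occurrence at position i. -/
def fsp (P : List Step) (i : ℕ) : Prop := P[i]? = some Step.U ∧ P[i + 1]? = some Step.U

def bit (b : Bool) : ℕ := if b then 1 else 0

/-- Gap block: `(DU)^j` followed by one or two down-ish steps; with `s = 1`
this is the inner block `(DU)^j D` / `(DU)^j DD`, and in general the final
block `(DU)^j C_s` / `(DU)^j D C_s`. -/
def gw (g : ℕ × Bool) (s : ℕ) : List Step :=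
  DUpow g.1 ++ (if g.2 then [Step.D, cfin s] else [cfin s])

/-- The tail word of a canonical path. -/
def Tw : List ((ℕ × Bool) × ℕ) → (ℕ × Bool) → ℕ → List Step
  | [], gf, s => gw gf s
  | (g, k) :: ps, gf, s => gw g 1 ++ Upow k ++ Tw ps gf s

def S (P : List Step) : ℤ := (P.map Step.val).sum

lemma UDpow_succ (k : ℕ) : UDpow (k + 1) = Step.U :: Step.D :: UDpow k := by
  simp [UDpow, List.replicate_succ]

lemma DUpow_succ (k : ℕ) : DUpow (k + 1) = Step.D :: Step.U :: DUpow k := by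
  simp [DUpow, List.replicate_succ]

@[simp] lemma length_UDpow (k : ℕ) : (UDpow k).length = 2 * k := by
  induction k with
  | zero => rfl
  | succ k ih => rw [UDpow_succ]; simp [ih]; omega

@[simp] lemma length_DUpow (k : ℕ) : (DUpow k).length = 2 * k := by
  induction k with
  | zero => rfl
  | succ k ih => rw [DUpow_succ]; simp [ih]; omega

@[simp] lemma length_Upow (k : ℕ) : (Upow k).length = k := by simp [Upow]

@[simp] lemma length_gw (g : ℕ × Bool) (s : ℕ) :
    (gw g s).length = 2 * g.1 + 1 + bit g.2 := by
  rcases g with ⟨j, b⟩; cases b <;> simp [gw, bit]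

lemma getElem?_UDpow (k i : ℕ) :
    (UDpow k)[i]? = if i < 2 * k then some (if i % 2 = 0 then Step.U else Step.D) else none := by
  induction k generalizing i with
  | zero => simp [UDpow]
  | succ k ih =>
    rw [UDpow_succ]
    match i with
    | 0 => simp
    | 1 => rw [if_pos (by omega)]; norm_num
    | (i+2) =>
      simp only [List.getElem?_cons_succ, ih]
      have h1 : (i + 2) % 2 = i % 2 := by omega
      by_cases h : i < 2 * k
      · rw [if_pos h, if_pos (show i + 2 < 2 * (k + 1) by omega), h1]
      · rw [if_neg h, if_neg (show ¬ (i + 2 < 2 * (k + 1)) by omega)]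

lemma getElem?_DUpow (k i : ℕ) :
    (DUpow k)[i]? = if i < 2 * k then some (if i % 2 = 0 then Step.D else Step.U) else none := by
  induction k generalizing i with
  | zero => simp [DUpow]
  | succ k ih =>
    rw [DUpow_succ]
    match i with
    | 0 => rw [if_pos (by omega)]; norm_num
    | 1 => rw [if_pos (by omega)]; norm_num
    | (i+2) =>
      simp only [List.getElem?_cons_succ, ih]
      have h1 : (i + 2) % 2 = i % 2 := by omega
      by_cases h : i < 2 * k
      · rw [if_pos h, if_pos (show i + 2 < 2 * (k + 1) by omega), h1]
      · rw [if_neg h, if_neg (show ¬ (i + 2 < 2 * (k + 1)) by omega)]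

lemma cfin_ne_U (s : ℕ) : cfin s ≠ Step.U := by
  unfold cfin; split <;> simp

lemma UDpow_U {k i : ℕ} : (UDpow k)[i]? = some Step.U ↔ i < 2 * k ∧ i % 2 = 0 := by
  rw [getElem?_UDpow]
  rcases Nat.lt_or_ge i (2 * k) with h | h
  · rw [if_pos h]
    by_cases h2 : i % 2 = 0
    · rw [if_pos h2]; exact iff_of_true rfl ⟨h, h2⟩
    · rw [if_neg h2]; exact iff_of_false (by simp) (by omega)
  · rw [if_neg (by omega)]; exact iff_of_false (by simp) (by omega)

lemma DUpow_U {k i : ℕ} : (DUpow k)[i]? = some Step.U ↔ i < 2 * k ∧ i % 2 = 1 := by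
  rw [getElem?_DUpow]
  rcases Nat.lt_or_ge i (2 * k) with h | h
  · rw [if_pos h]
    by_cases h2 : i % 2 = 0
    · rw [if_pos h2]; exact iff_of_false (by simp) (by omega)
    · rw [if_neg h2]; exact iff_of_true rfl ⟨h, by omega⟩
  · rw [if_neg (by omega)]; exact iff_of_false (by simp) (by omega)

lemma Upow_U {k i : ℕ} : (Upow k)[i]? = some Step.U ↔ i < k := by
  unfold Upow
  rw [List.getElem?_replicate]
  split <;> simp_all

lemma getElem?_pair_ne {a c : Step} (ha : a ≠ Step.U) (hc : c ≠ Step.U) (d : ℕ) :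
    [a, c][d]? ≠ some Step.U := by
  match d with
  | 0 => simpa using ha
  | 1 => simpa using hc
  | (d+2) => simp

lemma getElem?_single_ne {a : Step} (ha : a ≠ Step.U) (d : ℕ) :
    [a][d]? ≠ some Step.U := by
  match d with
  | 0 => simpa using ha
  | (d+1) => simp

lemma gw_U {g : ℕ × Bool} {s i : ℕ} : (gw g s)[i]? = some Step.U ↔ i < 2 * g.1 ∧ i % 2 = 1 := by
  rcases g with ⟨j, b⟩
  dsimp only [gw]
  rcases Nat.lt_or_ge i (2 * j) with h | h
  · rw [List.getElem?_append_left (by simpa using h)]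
    exact DUpow_U
  · rw [List.getElem?_append_right (by simpa using h)]
    refine iff_of_false ?_ (by omega)
    cases b
    · simpa using getElem?_single_ne (cfin_ne_U s) (i - (DUpow j).length)
    · simpa using getElem?_pair_ne (by simp) (cfin_ne_U s) (i - (DUpow j).length)

end CatProof
namespace CatProof

lemma fsp_UDpow (k i : ℕ) : ¬ fsp (UDpow k) i := by
  rintro ⟨h1, h2⟩
  rw [UDpow_U] at h1 h2
  omega

lemma fsp_gw (g : ℕ × Bool) (s i : ℕ) : ¬ fsp (gw g s) i := by
  rintro ⟨h1, h2⟩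
  rw [gw_U] at h1 h2
  omega

lemma fsp_shift (X Y : List Step) (i : ℕ) :
    fsp (X ++ Y) (X.length + i) ↔ fsp Y i := by
  unfold fsp
  rw [List.getElem?_append_right (by omega), List.getElem?_append_right (by omega)]
  have h1 : X.length + i - X.length = i := by omega
  have h2 : X.length + i + 1 - X.length = i + 1 := by omega
  rw [h1, h2]

lemma fsp_ge_shift {X Y : List Step} {i : ℕ} (h : X.length ≤ i) :
    fsp (X ++ Y) i ↔ fsp Y (i - X.length) := by
  have h2 := fsp_shift X Y (i - X.length)
  rwa [show X.length + (i - X.length) = i by omega] at h2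

/-- U-positions of the glued word `X ++ U^k ++ T`. -/
lemma glue_U (X T : List Step) (k : ℕ) (i : ℕ) :
    (X ++ Upow k ++ T)[i]? = some Step.U ↔
      (i < X.length ∧ X[i]? = some Step.U) ∨
      (X.length ≤ i ∧ i < X.length + k) ∨
      (X.length + k ≤ i ∧ T[i - (X.length + k)]? = some Step.U) := by
  rcases Nat.lt_or_ge i X.length with h | h
  · rw [List.getElem?_append_left (by simp; omega)]
    rw [List.getElem?_append_left h]
    constructor
    · intro hu; exact Or.inl ⟨h, hu⟩
    · rintro (⟨_, hu⟩ | ⟨h2, _⟩ | ⟨h2, _⟩) <;> first | exact hu | omega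
  · rcases Nat.lt_or_ge i (X.length + k) with h2 | h2
    · rw [List.getElem?_append_left (by simp; omega),
        List.getElem?_append_right h]
      have : (Upow k)[i - X.length]? = some Step.U ↔ i - X.length < k := Upow_U
      rw [this]
      constructor
      · intro _; exact Or.inr (Or.inl ⟨h, h2⟩)
      · intro _; omega
    · rw [List.getElem?_append_right (by simp; omega)]
      have hl : (X ++ Upow k).length = X.length + k := by simp
      rw [hl]
      constructor
      · intro hu; exact Or.inr (Or.inr ⟨h2, hu⟩)
      · rintro (⟨h3, _⟩ | ⟨_, h3⟩ | ⟨_, hu⟩) <;> first | exact hu | omega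

/-- The UU-occurrences of the glued word `X ++ U^k ++ T`, provided `X` has no
UU-occurrence, does not end with `U`, and `T` does not begin with `U`. -/
lemma fsp_glue (X T : List Step) (k : ℕ) (hk : 2 ≤ k)
    (hX : ∀ i, ¬ fsp X i)
    (hXlast : ∀ i, i + 1 = X.length → X[i]? ≠ some Step.U)
    (hT0 : T[0]? ≠ some Step.U) :
    ∀ i, fsp (X ++ Upow k ++ T) i ↔
      (X.length ≤ i ∧ i + 2 ≤ X.length + k) ∨
      (X.length + k ≤ i ∧ fsp T (i - (X.length + k))) := by
  intro i
  unfold fsp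
  rw [glue_U, glue_U]
  constructor
  · rintro ⟨c1, c2⟩
    rcases c1 with ⟨h1, hu1⟩ | ⟨h1, h1'⟩ | ⟨h1, hu1⟩
    · -- first char in X
      rcases c2 with ⟨h2, hu2⟩ | ⟨h2, h2'⟩ | ⟨h2, hu2⟩
      · exact absurd ⟨hu1, hu2⟩ (hX i)
      · exact absurd hu1 (hXlast i (by omega))
      · omega
    · rcases c2 with ⟨h2, hu2⟩ | ⟨h2, h2'⟩ | ⟨h2, hu2⟩
      · omega
      · exact Or.inl ⟨h1, by omega⟩
      · -- i in Upow, i+1 in T: i+1 = X.length + k, so T[0] = U, contra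
        have : i + 1 - (X.length + k) = 0 := by omega
        rw [this] at hu2
        exact absurd hu2 hT0
    · exact Or.inr ⟨h1, by
        have : i + 1 - (X.length + k) = i - (X.length + k) + 1 := by omega
        rcases c2 with ⟨h2, hu2⟩ | ⟨h2, h2'⟩ | ⟨h2, hu2⟩
        · omega
        · omega
        · rw [this] at hu2; exact ⟨hu1, hu2⟩⟩
  · rintro (⟨h1, h2⟩ | ⟨h1, ⟨hu1, hu2⟩⟩)
    · exact ⟨Or.inr (Or.inl ⟨h1, by omega⟩), Or.inr (Or.inl ⟨by omega, by omega⟩)⟩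
    · refine ⟨Or.inr (Or.inr ⟨h1, hu1⟩), Or.inr (Or.inr ⟨by omega, ?_⟩)⟩
      have : i + 1 - (X.length + k) = i - (X.length + k) + 1 := by omega
      rw [this]
      exact hu2

lemma gw_head (g : ℕ × Bool) (s : ℕ) : (gw g s)[0]? ≠ some Step.U := by
  intro h; rw [gw_U] at h; omega

lemma gw_last (g : ℕ × Bool) (s : ℕ) :
    ∀ i, i + 1 = (gw g s).length → (gw g s)[i]? ≠ some Step.U := by
  intro i hi h
  rw [gw_U] at h
  rw [length_gw] at hi
  rcases g with ⟨j, b⟩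
  cases b <;> simp [bit] at hi <;> omega

lemma UDpow_last (l0 : ℕ) :
    ∀ i, i + 1 = (UDpow l0).length → (UDpow l0)[i]? ≠ some Step.U := by
  intro i hi h
  rw [UDpow_U] at h
  rw [length_UDpow] at hi
  omega

lemma Tw_head (ps : List ((ℕ × Bool) × ℕ)) (gf : ℕ × Bool) (s : ℕ) :
    (Tw ps gf s)[0]? ≠ some Step.U := by
  cases ps with
  | nil => exact gw_head gf s
  | cons p ps =>
    rcases p with ⟨g, k⟩
    show ((gw g 1 ++ Upow k) ++ _)[0]? ≠ some Step.U
    rw [List.append_assoc, List.getElem?_append_left (by rw [length_gw]; omega)]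
    exact gw_head g 1

lemma Tw_ne_nil (ps : List ((ℕ × Bool) × ℕ)) (gf : ℕ × Bool) (s : ℕ) :
    Tw ps gf s ≠ [] := by
  cases ps with
  | nil =>
    show gw gf s ≠ []
    intro h
    have := congrArg List.length h
    simp [bit] at this
  | cons p ps =>
    rcases p with ⟨g, k⟩
    intro h
    have hlen := congrArg List.length (show gw g 1 ++ Upow k ++ Tw ps gf s = [] from h)
    simp only [List.length_append, length_gw, List.length_nil] at hlen
    omega

/-- UU-occurrence characterization of a tail word (cons case). -/
lemma fsp_Tw_cons (g : ℕ × Bool) (k : ℕ) (ps : List ((ℕ × Bool) × ℕ)) (gf : ℕ × Bool)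
    (s : ℕ) (hk : 2 ≤ k) (i : ℕ) :
    fsp (Tw ((g, k) :: ps) gf s) i ↔
      ((gw g 1).length ≤ i ∧ i + 2 ≤ (gw g 1).length + k) ∨
      ((gw g 1).length + k ≤ i ∧ fsp (Tw ps gf s) (i - ((gw g 1).length + k))) := by
  exact fsp_glue (gw g 1) (Tw ps gf s) k hk (fsp_gw g 1) (gw_last g 1) (Tw_head ps gf s) i

lemma fsp_Tw_nil (gf : ℕ × Bool) (s i : ℕ) : ¬ fsp (Tw [] gf s) i := fsp_gw gf s i

/-- UU-occurrence characterization of the full canonical word. -/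
lemma fsp_W (l0 k1 : ℕ) (ps : List ((ℕ × Bool) × ℕ)) (gf : ℕ × Bool) (s : ℕ)
    (hk : 2 ≤ k1) (i : ℕ) :
    fsp (UDpow l0 ++ Upow k1 ++ Tw ps gf s) i ↔
      (2 * l0 ≤ i ∧ i + 2 ≤ 2 * l0 + k1) ∨
      (2 * l0 + k1 ≤ i ∧ fsp (Tw ps gf s) (i - (2 * l0 + k1))) := by
  have := fsp_glue (UDpow l0) (Tw ps gf s) k1 hk (fsp_UDpow l0) (UDpow_last l0)
    (Tw_head ps gf s) i
  rwa [length_UDpow] at this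

end CatProof
namespace CatProof

@[simp] lemma S_nil : S [] = 0 := rfl

@[simp] lemma val_U : Step.U.val = 1 := rfl
@[simp] lemma val_D : Step.D.val = -1 := rfl
@[simp] lemma val_C (k : ℕ) : (Step.C k).val = -(k : ℤ) := rfl
@[simp] lemma bit_false : bit false = 0 := rfl
@[simp] lemma bit_true : bit true = 1 := rfl
lemma gw_false (j s : ℕ) : gw (j, false) s = DUpow j ++ [cfin s] := rfl
lemma gw_true (j s : ℕ) : gw (j, true) s = DUpow j ++ [Step.D, cfin s] := rfl

@[simp] lemma S_append (x y : List Step) : S (x ++ y) = S x + S y := by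
  simp [S]

lemma S_take_append (x y : List Step) (i : ℕ) :
    S ((x ++ y).take i) = S (x.take i) + S (y.take (i - x.length)) := by
  rw [List.take_append, S_append]

lemma S_take_of_le {x : List Step} {i : ℕ} (h : x.length ≤ i) : S (x.take i) = S x := by
  rw [List.take_of_length_le h]

lemma hgt_eq (P : List Step) (i : ℕ) : hgt P i = S (P.take i) := rfl

@[simp] lemma val_cfin (s : ℕ) : (cfin s).val = -(s : ℤ) := by
  unfold cfin
  split
  · subst s; rfl
  · rfl

@[simp] lemma S_UDpow (k : ℕ) : S (UDpow k) = 0 := by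
  induction k with
  | zero => rfl
  | succ k ih => rw [UDpow_succ]; simp [S, Step.val] at ih ⊢; omega

@[simp] lemma S_DUpow (k : ℕ) : S (DUpow k) = 0 := by
  induction k with
  | zero => rfl
  | succ k ih => rw [DUpow_succ]; simp [S, Step.val] at ih ⊢; omega

@[simp] lemma S_Upow (k : ℕ) : S (Upow k) = k := by
  simp [S, Upow, Step.val]

lemma S_gw (g : ℕ × Bool) (s : ℕ) : S (gw g s) = -(s : ℤ) - bit g.2 := by
  rcases g with ⟨j, b⟩
  cases b
  · rw [gw_false, S_append, S_DUpow]; simp [S]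
  · rw [gw_true, S_append, S_DUpow]; simp [S]; ring

lemma lb_UD (k i : ℕ) : 0 ≤ S ((UDpow k).take i) := by
  induction k generalizing i with
  | zero => simp [UDpow]
  | succ k ih =>
    rw [UDpow_succ]
    match i with
    | 0 => simp
    | 1 => simp [S, Step.val]
    | (i+2) =>
      have : (Step.U :: Step.D :: UDpow k).take (i + 2) =
          Step.U :: Step.D :: (UDpow k).take i := rfl
      rw [this]
      have h := ih i
      simp [S, Step.val] at h ⊢
      omega

lemma lb_DU (k i : ℕ) : -1 ≤ S ((DUpow k).take i) := by
  induction k generalizing i with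
  | zero => simp [DUpow]
  | succ k ih =>
    rw [DUpow_succ]
    match i with
    | 0 => simp
    | 1 => simp [S, Step.val]
    | (i+2) =>
      have : (Step.D :: Step.U :: DUpow k).take (i + 2) =
          Step.D :: Step.U :: (DUpow k).take i := rfl
      rw [this]
      have h := ih i
      simp [S, Step.val] at h ⊢
      omega

lemma lb_U (k i : ℕ) : 0 ≤ S ((Upow k).take i) := by
  unfold Upow
  rw [List.take_replicate]
  simp [S, Step.val]

lemma lb_gw {s : ℕ} (g : ℕ × Bool) (hs : 1 ≤ s) (i : ℕ) :
    -(s : ℤ) - bit g.2 ≤ S ((gw g s).take i) := by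
  rcases g with ⟨j, b⟩
  have hs' : (1 : ℤ) ≤ (s : ℕ) := by exact_mod_cast hs
  cases b
  · rw [gw_false, S_take_append]
    show -(s : ℤ) - ((0 : ℕ) : ℤ) ≤ _
    rcases Nat.lt_or_ge i (2 * j) with h | h
    · have hz : i - (DUpow j).length = 0 := by simp; omega
      rw [hz]
      have := lb_DU j i
      simp only [List.take_zero, S_nil]
      omega
    · rw [S_take_of_le (by simpa using h), S_DUpow]
      match i - (DUpow j).length with
      | 0 => simp <;> omega
      | (d+1) =>
        have ht : List.take (d + 1) [cfin s] = [cfin s] := by simp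
        rw [ht]
        simp [S]
  · rw [gw_true, S_take_append]
    show -(s : ℤ) - ((1 : ℕ) : ℤ) ≤ _
    rcases Nat.lt_or_ge i (2 * j) with h | h
    · have hz : i - (DUpow j).length = 0 := by simp; omega
      rw [hz]
      have := lb_DU j i
      simp only [List.take_zero, S_nil]
      omega
    · rw [S_take_of_le (by simpa using h), S_DUpow]
      match i - (DUpow j).length with
      | 0 => simp <;> omega
      | 1 =>
        have ht : List.take 1 [Step.D, cfin s] = [Step.D] := rfl
        rw [ht]
        simp [S] <;> omega
      | (d+2) =>
        have ht : List.take (d + 2) [Step.D, cfin s] = [Step.D, cfin s] := by simp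
        rw [ht]
        simp [S] <;> omega

def tsum (ps : List ((ℕ × Bool) × ℕ)) : ℤ :=
  (ps.map (fun p => (p.2 : ℤ) - 1 - bit p.1.2)).sum

@[simp] lemma tsum_nil : tsum [] = 0 := rfl

lemma tsum_cons (p : (ℕ × Bool) × ℕ) (ps : List ((ℕ × Bool) × ℕ)) :
    tsum (p :: ps) = ((p.2 : ℤ) - 1 - bit p.1.2) + tsum ps := by
  simp [tsum]

lemma bit_nonneg (b : Bool) : (0 : ℤ) ≤ bit b := by unfold bit; split <;> norm_num
lemma bit_le_one (b : Bool) : (bit b : ℤ) ≤ 1 := by unfold bit; split <;> norm_num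

/-- Height facts for tail words. -/
lemma htT : ∀ (ps : List ((ℕ × Bool) × ℕ)) (gf : ℕ × Bool) (s : ℕ) (h : ℤ),
    2 ≤ h → (∀ p ∈ ps, 2 ≤ p.2) → (s : ℤ) = h + tsum ps - bit gf.2 →
    (∀ i, 0 ≤ h + S ((Tw ps gf s).take i)) ∧ h + S (Tw ps gf s) = 0 := by
  intro ps
  induction ps with
  | nil =>
    intro gf s h h2 _ hs
    have hb0 := bit_nonneg gf.2
    have hb1 := bit_le_one gf.2
    have hs1 : 1 ≤ s := by
      have : (1 : ℤ) ≤ (s : ℤ) := by rw [hs]; simp [tsum_nil] at *; omega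
      exact_mod_cast this
    constructor
    · intro i
      have := lb_gw gf hs1 i
      show 0 ≤ h + S ((gw gf s).take i)
      simp only [tsum_nil, add_zero] at hs
      omega
    · show h + S (gw gf s) = 0
      rw [S_gw]
      simp only [tsum_nil, add_zero] at hs
      omega
  | cons p ps ih =>
    rcases p with ⟨g, k⟩
    intro gf s h h2 hk hs
    have hk2 : 2 ≤ k := hk (g, k) List.mem_cons_self
    have hb0 := bit_nonneg g.2
    have hb1 := bit_le_one g.2
    rw [tsum_cons] at hs
    set h' : ℤ := h - 1 - bit g.2 + k with hh'
    have hs' : (s : ℤ) = h' + tsum ps - bit gf.2 := by rw [hh']; push_cast at hs ⊢; linarith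
    have hh2 : 2 ≤ h' := by
      have : (2 : ℤ) ≤ (k : ℤ) := by exact_mod_cast hk2
      omega
    obtain ⟨ihA, ihB⟩ := ih gf s h' hh2 (fun p hp => hk p (List.mem_cons_of_mem _ hp)) hs'
    have hTw : Tw ((g, k) :: ps) gf s = gw g 1 ++ Upow k ++ Tw ps gf s := rfl
    constructor
    · intro i
      rw [hTw, S_take_append, S_take_append]
      have e1 : (gw g 1 ++ Upow k).length = (2 * g.1 + 1 + bit g.2) + k := by simp
      rw [e1]
      have lbA := lb_gw g (le_refl 1) i
      have lbB := lb_U k (i - (gw g 1).length)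
      rcases Nat.lt_or_ge i ((2 * g.1 + 1 + bit g.2) + k) with hlt | hge
      · have : i - (2 * g.1 + 1 + bit g.2 + k) = 0 := by omega
        rw [this]
        simp only [List.take_zero, S_nil, add_zero]
        push_cast
        omega
      · have hA : S ((gw g 1).take i) = S (gw g 1) := S_take_of_le (by rw [length_gw]; omega)
        have hB : S ((Upow k).take (i - (gw g 1).length)) = S (Upow k) :=
          S_take_of_le (by rw [length_Upow, length_gw]; omega)
        rw [hA, hB, S_gw, S_Upow]
        have := ihA (i - (2 * g.1 + 1 + bit g.2 + k))
        push_cast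
        omega
    · rw [hTw]
      simp only [S_append, S_gw, S_Upow]
      push_cast
      push_cast at ihB
      omega

end CatProof
namespace CatProof

lemma cfin_one : cfin 1 = Step.D := rfl

lemma gw_one (g : ℕ × Bool) :
    gw g 1 = DUpow g.1 ++ (if g.2 then [Step.D, Step.D] else [Step.D]) := by
  rcases g with ⟨j, b⟩
  cases b <;> rfl

lemma UDpow_C {k i c : ℕ} : (UDpow k)[i]? = some (Step.C c) → False := by
  rw [getElem?_UDpow]
  split
  · split <;> simp
  · simp

lemma DUpow_C {k i c : ℕ} : (DUpow k)[i]? = some (Step.C c) → False := by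
  rw [getElem?_DUpow]
  split
  · split <;> simp
  · simp

lemma Upow_C {k i c : ℕ} : (Upow k)[i]? = some (Step.C c) → False := by
  unfold Upow
  rw [List.getElem?_replicate]
  split <;> simp

lemma mem_of_getElem?' {l : List Step} {i : ℕ} {a : Step} (h : l[i]? = some a) : a ∈ l := by
  obtain ⟨hlt, rfl⟩ := List.getElem?_eq_some_iff.mp h
  exact List.getElem_mem hlt

lemma mem_UDpow {k : ℕ} {x : Step} (h : x ∈ UDpow k) : x = Step.U ∨ x = Step.D := by
  induction k with
  | zero => simp [UDpow] at h
  | succ k ih =>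
    rw [UDpow_succ] at h
    simp only [List.mem_cons] at h
    rcases h with h | h | h
    · exact Or.inl h
    · exact Or.inr h
    · exact ih (by simpa using h)

lemma mem_DUpow {k : ℕ} {x : Step} (h : x ∈ DUpow k) : x = Step.U ∨ x = Step.D := by
  induction k with
  | zero => simp [DUpow] at h
  | succ k ih =>
    rw [DUpow_succ] at h
    simp only [List.mem_cons] at h
    rcases h with h | h | h
    · exact Or.inr h
    · exact Or.inl h
    · exact ih (by simpa using h)

lemma gw1_C {g : ℕ × Bool} {i c : ℕ} : (gw g 1)[i]? = some (Step.C c) → False := by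
  intro h
  have hm : Step.C c ∈ gw g 1 := mem_of_getElem?' h
  rw [gw_one] at hm
  rcases List.mem_append.mp hm with hm | hm
  · rcases mem_DUpow hm with h' | h' <;> simp at h'
  · rcases g with ⟨j, b⟩
    cases b <;> simp at hm

lemma Tw_C : ∀ (ps : List ((ℕ × Bool) × ℕ)) (gf : ℕ × Bool) (s i c : ℕ),
    (Tw ps gf s)[i]? = some (Step.C c) →
    i + 1 = (Tw ps gf s).length ∧ Step.C c = cfin s := by
  intro ps
  induction ps with
  | nil =>
    intro gf s i c h
    rcases gf with ⟨m, b⟩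
    rcases Nat.lt_or_ge i (2 * m) with hl | hl
    · exfalso
      cases b
      · rw [show Tw [] (m, false) s = DUpow m ++ [cfin s] from rfl,
          List.getElem?_append_left (by simpa using hl)] at h
        exact DUpow_C h
      · rw [show Tw [] (m, true) s = DUpow m ++ [Step.D, cfin s] from rfl,
          List.getElem?_append_left (by simpa using hl)] at h
        exact DUpow_C h
    · cases b
      · rw [show Tw [] (m, false) s = DUpow m ++ [cfin s] from rfl,
          List.getElem?_append_right (by simpa using hl)] at h
        have hlen : (Tw [] (m, false) s).length = 2 * m + 1 := by
          show (gw (m, false) s).length = _; simp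
        match hd : i - (DUpow m).length, h with
        | 0, h =>
          have h2 : cfin s = Step.C c := by simpa using h
          have : i = 2 * m := by simp at hd; omega
          exact ⟨by rw [hlen]; omega, h2.symm⟩
        | (d+1), h => simp at h
      · rw [show Tw [] (m, true) s = DUpow m ++ [Step.D, cfin s] from rfl,
          List.getElem?_append_right (by simpa using hl)] at h
        have hlen : (Tw [] (m, true) s).length = 2 * m + 2 := by
          show (gw (m, true) s).length = _; simp [bit]
        match hd : i - (DUpow m).length, h with
        | 0, h => simp at h
        | 1, h =>
          have h2 : cfin s = Step.C c := by simpa using h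
          have : i = 2 * m + 1 := by simp at hd; omega
          exact ⟨by rw [hlen]; omega, h2.symm⟩
        | (d+2), h => simp at h
  | cons p ps ih =>
    intro gf s i c h
    rcases p with ⟨g, k⟩
    have e : Tw ((g, k) :: ps) gf s = gw g 1 ++ Upow k ++ Tw ps gf s := rfl
    have hL : (gw g 1 ++ Upow k).length = 2 * g.1 + 1 + bit g.2 + k := by simp
    rcases Nat.lt_or_ge i ((gw g 1 ++ Upow k).length) with hl | hl
    · exfalso
      rw [e, List.getElem?_append_left hl] at h
      rcases Nat.lt_or_ge i (gw g 1).length with hl2 | hl2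
      · rw [List.getElem?_append_left hl2] at h
        exact gw1_C h
      · rw [List.getElem?_append_right hl2] at h
        exact Upow_C h
    · rw [e, List.getElem?_append_right hl] at h
      obtain ⟨h1, h2⟩ := ih gf s _ c h
      refine ⟨?_, h2⟩
      rw [e]
      simp only [List.length_append] at h1 hl ⊢
      omega

def midsOf : ℕ → List ((ℕ × Bool) × ℕ) → List (ℕ × ℕ × Bool) × ℕ
  | k, [] => ([], k)
  | k, (g, k') :: ps => ((k, g.1, g.2) :: (midsOf k' ps).1, (midsOf k' ps).2)

lemma midsOf_word : ∀ (ps : List ((ℕ × Bool) × ℕ)) (k : ℕ) (gf : ℕ × Bool) (s : ℕ),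
    Upow k ++ Tw ps gf s =
      ((midsOf k ps).1.map (fun t => Upow t.1 ++ DUpow t.2.1 ++
        (if t.2.2 then [Step.D, Step.D] else [Step.D]))).flatten ++
      Upow (midsOf k ps).2 ++ DUpow gf.1 ++
      (if gf.2 then [Step.D, cfin s] else [cfin s]) := by
  intro ps
  induction ps with
  | nil =>
    intro k gf s
    show Upow k ++ gw gf s = _
    rw [gw]
    simp [midsOf, List.append_assoc]
  | cons p ps ih =>
    intro k gf s
    rcases p with ⟨g, k'⟩
    show Upow k ++ (gw g 1 ++ Upow k' ++ Tw ps gf s) = _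
    rw [gw_one,
      show midsOf k ((g, k') :: ps) = ((k, g.1, g.2) :: (midsOf k' ps).1, (midsOf k' ps).2)
        from rfl]
    simp only [List.map_cons, List.flatten_cons, List.append_assoc]
    rw [ih k' gf s]
    simp [List.append_assoc]

lemma midsOf_constraints : ∀ (ps : List ((ℕ × Bool) × ℕ)) (k : ℕ),
    2 ≤ k → (∀ p ∈ ps, 2 ≤ p.2) →
    (∀ t ∈ (midsOf k ps).1, 2 ≤ t.1) ∧ 2 ≤ (midsOf k ps).2 := by
  intro ps
  induction ps with
  | nil => intro k hk _; exact ⟨by simp [midsOf], hk⟩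
  | cons p ps ih =>
    intro k hk hps
    rcases p with ⟨g, k'⟩
    obtain ⟨ih1, ih2⟩ := ih k' (hps (g, k') List.mem_cons_self)
      (fun q hq => hps q (List.mem_cons_of_mem _ hq))
    refine ⟨?_, ih2⟩
    intro t ht
    rcases List.mem_cons.mp ht with h | h
    · rw [h]; exact hk
    · exact ih1 t h

lemma tsum_nonneg {ps : List ((ℕ × Bool) × ℕ)} (h : ∀ p ∈ ps, 2 ≤ p.2) : 0 ≤ tsum ps := by
  induction ps with
  | nil => simp [tsum]
  | cons p ps ih =>
    rw [tsum_cons]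
    have h1 : 2 ≤ p.2 := h p List.mem_cons_self
    have h2 := ih (fun q hq => h q (List.mem_cons_of_mem _ hq))
    have := bit_le_one p.1.2
    have : ((p.2 : ℤ) - 1 - bit p.1.2) ≥ 0 := by
      have : (2 : ℤ) ≤ (p.2 : ℤ) := by exact_mod_cast h1
      have := bit_le_one p.1.2
      omega
    omega

lemma S_take_pred {l : List Step} {i : ℕ} {x : Step} (h : l[i]? = some x)
    (hi : i + 1 = l.length) : S (l.take i) = S l - x.val := by
  have h1 : l.take (i + 1) = l := List.take_of_length_le (by omega)
  have h2 : l.take (i + 1) = l.take i ++ [x] := by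
    rw [List.take_succ, h]
    rfl
  have := congrArg S h2
  rw [h1] at this
  rw [this]
  simp [S]

/-- The canonical path with given shape data is in ℰ and ℱ. -/
lemma canonical_good (l0 k1 : ℕ) (ps : List ((ℕ × Bool) × ℕ)) (gf : ℕ × Bool)
    (hk1 : 2 ≤ k1) (hps : ∀ p ∈ ps, 2 ≤ p.2) :
    ∃ s : ℕ, InE (UDpow l0 ++ Upow k1 ++ Tw ps gf s) ∧
      InF (UDpow l0 ++ Upow k1 ++ Tw ps gf s) := by
  have hts := tsum_nonneg hps
  have hb0 := bit_nonneg gf.2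
  have hb1 := bit_le_one gf.2
  set sZ : ℤ := (k1 : ℤ) + tsum ps - bit gf.2 with hsZ
  have hsZ1 : 1 ≤ sZ := by
    have : (2 : ℤ) ≤ (k1 : ℤ) := by exact_mod_cast hk1
    omega
  refine ⟨sZ.toNat, ?_, ?_⟩
  · -- InE
    set s := sZ.toNat with hs
    have hcast : (s : ℤ) = sZ := Int.toNat_of_nonneg (by omega)
    have hs1 : 1 ≤ s := by omega
    obtain ⟨hA, hB⟩ := htT ps gf s (k1 : ℤ) (by exact_mod_cast hk1) hps (by rw [hcast])
    set W := UDpow l0 ++ Upow k1 ++ Tw ps gf s with hW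
    have hgtW : ∀ i, hgt W i =
        S ((UDpow l0).take i) + S ((Upow k1).take (i - 2 * l0)) +
        S ((Tw ps gf s).take (i - (2 * l0 + k1))) := by
      intro i
      rw [hgt_eq, hW, S_take_append, S_take_append]
      simp only [List.length_append, length_UDpow, length_Upow]
    have hnonneg : ∀ i, 0 ≤ hgt W i := by
      intro i
      rw [hgtW]
      rcases Nat.lt_or_ge i (2 * l0 + k1) with hlt | hge
      · have hz : i - (2 * l0 + k1) = 0 := by omega
        rw [hz]
        have := lb_UD l0 i
        have := lb_U k1 (i - 2 * l0)
        simp only [List.take_zero, S_nil]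
        omega
      · rw [S_take_of_le (by simp; omega), S_take_of_le (by simp; omega), S_UDpow, S_Upow]
        have := hA (i - (2 * l0 + k1))
        omega
    have hend : hgt W W.length = 0 := by
      rw [hgt_eq, List.take_of_length_le (le_refl _), hW]
      simp only [S_append, S_UDpow, S_Upow]
      omega
    refine ⟨hnonneg, hend, ?_⟩
    intro i c hc
    have hiW : 2 * l0 + k1 ≤ i := by
      by_contra hcon
      push_neg at hcon
      rcases Nat.lt_or_ge i (2 * l0) with h1 | h1
      · rw [hW, List.append_assoc, List.getElem?_append_left (by simpa using h1)] at hc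
        exact absurd hc (fun h => UDpow_C h)
      · rw [hW, List.append_assoc, List.getElem?_append_right (by simpa using h1)] at hc
        rw [List.getElem?_append_left (by simp; omega)] at hc
        exact absurd hc (fun h => Upow_C h)
    have hc' : (Tw ps gf s)[i - (2 * l0 + k1)]? = some (Step.C c) := by
      rw [hW, List.append_assoc, List.getElem?_append_right (by simp; omega)] at hc
      rw [List.getElem?_append_right (by simp; omega)] at hc
      have e2 : i - (UDpow l0).length - (Upow k1).length = i - (2 * l0 + k1) := by
        simp; omega
      rwa [e2] at hc
    obtain ⟨hT1, hT2⟩ := Tw_C ps gf s _ c hc'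
    have hlast : i + 1 = W.length := by
      rw [hW]
      simp only [List.length_append, length_UDpow, length_Upow]
      omega
    have hcs : c = s ∧ 2 ≤ s := by
      unfold cfin at hT2
      split at hT2
      · exact absurd hT2 (by simp)
      · refine ⟨?_, by omega⟩
        injection hT2.symm with h'
        omega
    have hSW : S W = 0 := by
      have h0 : hgt W W.length = S W := by rw [hgt_eq, List.take_of_length_le (le_refl _)]
      rw [← h0, hend]
    have hpred := S_take_pred hc hlast
    refine ⟨by omega, ?_⟩
    show hgt W i = (c : ℤ)
    rw [hgt_eq, hpred, hSW, show (Step.C c).val = -(c : ℤ) from rfl]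
    omega
  · -- InF
    right
    set s := sZ.toNat with hs
    obtain ⟨hm1, hm2⟩ := midsOf_constraints ps k1 hk1 hps
    refine ⟨l0, (midsOf k1 ps).1, (midsOf k1 ps).2, gf.1, s, gf.2, hm1, hm2, ?_, ?_⟩
    · omega
    · rw [List.append_assoc, midsOf_word ps k1 gf s]
      simp [List.append_assoc]

end CatProof
namespace CatProof

lemma hgt_succ {P : List Step} {i : ℕ} {x : Step} (h : P[i]? = some x) :
    hgt P (i + 1) = hgt P i + x.val := by
  rw [hgt_eq, hgt_eq, List.take_succ, h]
  show S (P.take i ++ [x]) = _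
  simp [S]

lemma fsp_lt {P : List Step} {i : ℕ} (h : fsp P i) : i + 2 ≤ P.length := by
  have h2 := h.2
  by_contra hc
  push_neg at hc
  rw [List.getElem?_eq_none (by omega)] at h2
  exact nomatch h2

lemma PL1 {P : List Step} (hP : InE P) {i : ℕ} (h : fsp P i) : i + 3 ≤ P.length := by
  have h2 := fsp_lt h
  by_contra hc
  push_neg at hc
  have hlen : P.length = i + 2 := by omega
  have hs : hgt P (i + 2) = hgt P (i + 1) + 1 := by
    rw [show i + 2 = i + 1 + 1 from rfl, hgt_succ h.2, val_U]
  have h0 := hP.2.1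
  have hn := hP.1 (i + 1)
  rw [hlen] at h0
  omega

lemma PL2 {P : List Step} (hP : InE P) :
    ∀ i, i ≤ P.length → (∀ j, j + 1 < i → ¬ fsp P j) →
      hgt P i = if i % 2 = 0 then 0 else 1 := by
  intro i
  induction i using Nat.strong_induction_on with
  | _ i ihs =>
    match i with
    | 0 => intro _ _; simp [hgt]
    | (i+1) =>
      intro hle hnf
      have hi := ihs i (by omega) (by omega) (fun j hj => hnf j (by omega))
      have hilt : i < P.length := by omega
      have hx : P[i]? = some P[i] := List.getElem?_eq_getElem hilt
      have hstep := hgt_succ hx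
      by_cases hpar : i % 2 = 0
      · rw [if_pos hpar] at hi
        rw [if_neg (by omega)]
        have hnn := hP.1 (i + 1)
        cases hc : P[i] with
        | U => rw [hc] at hstep; rw [hstep, hi]; simp
        | D =>
          exfalso
          rw [hc] at hstep
          rw [hstep, hi] at hnn
          simp at hnn
        | C k =>
          exfalso
          obtain ⟨hk2, hkh⟩ := hP.2.2 i k (by rw [hx, hc])
          rw [hi] at hkh
          have : (2 : ℤ) ≤ (k : ℤ) := by exact_mod_cast hk2
          omega
      · rw [if_neg hpar] at hi
        rw [if_pos (by omega)]
        have hnn := hP.1 (i + 1)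
        cases hc : P[i] with
        | U =>
          exfalso
          have hi1 : 1 ≤ i := by omega
          have hprev := ihs (i - 1) (by omega) (by omega) (fun j hj => hnf j (by omega))
          rw [if_pos (by omega)] at hprev
          have hx1 : P[i - 1]? = some P[i - 1] := List.getElem?_eq_getElem (by omega)
          have hstep1 := hgt_succ hx1
          rw [show i - 1 + 1 = i from by omega] at hstep1
          have hval : (P[i - 1]).val = 1 := by rw [hi, hprev] at hstep1; omega
          have hU : P[i - 1]? = some Step.U := by
            rw [hx1]
            cases hc2 : P[i - 1] with
            | U => rfl
            | D => rw [hc2] at hval; simp at hval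
            | C k => rw [hc2] at hval; simp at hval; omega
          refine hnf (i - 1) (by omega) ⟨hU, ?_⟩
          rw [show i - 1 + 1 = i from by omega, hx, hc]
        | D =>
          rw [hc] at hstep
          rw [hstep, hi]
          norm_num
        | C k =>
          exfalso
          obtain ⟨hk2, hkh⟩ := hP.2.2 i k (by rw [hx, hc])
          rw [hi] at hkh
          have : (2 : ℤ) ≤ (k : ℤ) := by exact_mod_cast hk2
          omega

lemma even_len_of_no_fsp {P : List Step} (hP : InE P) (h : ∀ i, ¬ fsp P i) :
    P.length % 2 = 0 := by
  have := PL2 hP P.length (le_refl _) (fun j _ => h j)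
  by_contra hc
  rw [if_neg hc] at this
  have h0 := hP.2.1
  omega

lemma min_fsp_even {P : List Step} (hP : InE P) {a : ℕ} (ha : fsp P a)
    (hmin : ∀ j, j < a → ¬ fsp P j) : a % 2 = 0 := by
  by_contra hc
  have ha1 : 1 ≤ a := by omega
  have hlen := fsp_lt ha
  have hA := PL2 hP a (by omega) (fun j hj => hmin j (by omega))
  have hB := PL2 hP (a - 1) (by omega) (fun j hj => hmin j (by omega))
  rw [if_neg hc] at hA
  rw [if_pos (by omega)] at hB
  have hx1 : P[a - 1]? = some P[a - 1] := List.getElem?_eq_getElem (by omega)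
  have hstep := hgt_succ hx1
  rw [show a - 1 + 1 = a from by omega] at hstep
  have hval : (P[a - 1]).val = 1 := by rw [hA, hB] at hstep; omega
  have hU : P[a - 1]? = some Step.U := by
    rw [hx1]
    cases hc2 : P[a - 1] with
    | U => rfl
    | D => rw [hc2] at hval; simp at hval
    | C k => rw [hc2] at hval; simp at hval; omega
  refine hmin (a - 1) (by omega) ⟨hU, ?_⟩
  rw [show a - 1 + 1 = a from by omega]
  exact ha.1

lemma fsp_drop (w : List Step) (d i : ℕ) : fsp (w.drop d) i ↔ fsp w (d + i) := by
  unfold fsp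
  rw [List.getElem?_drop, List.getElem?_drop]
  exact Iff.rfl

lemma runDecomp {w : List Step} {a e : ℕ} (ha : fsp w a)
    (hmin : ∀ j, j < a → ¬ fsp w j) (hne : ¬ fsp w e)
    (hemin : ∀ j, a ≤ j → j < e → fsp w j) (hae : a + 1 ≤ e) :
    ∀ i, fsp w i ↔ (a ≤ i ∧ i < e) ∨ (e + 1 ≤ i ∧ fsp (w.drop (e + 1)) (i - (e + 1))) := by
  intro i
  rcases Nat.lt_or_ge i a with h | h
  · exact iff_of_false (hmin i h) (by omega)
  · rcases Nat.lt_or_ge i e with h2 | h2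
    · exact iff_of_true (hemin i h h2) (Or.inl ⟨h, h2⟩)
    · rcases Nat.eq_or_lt_of_le h2 with h3 | h3
      · exact iff_of_false (h3 ▸ hne) (by omega)
      · rw [fsp_drop, show e + 1 + (i - (e + 1)) = i from by omega]
        constructor
        · intro hf; exact Or.inr ⟨by omega, hf⟩
        · rintro (⟨_, _⟩ | ⟨_, hf⟩)
          · omega
          · exact hf

def gapEnc (L : ℕ) : ℕ × Bool := if L % 2 = 1 then ((L - 1) / 2, false) else ((L - 2) / 2, true)

lemma gapEnc_len (L : ℕ) (h1 : 1 ≤ L) (s : ℕ) : (gw (gapEnc L) s).length = L := by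
  rw [length_gw]
  unfold gapEnc
  split
  · simp [bit]; omega
  · simp [bit]; omega

/-- Word-level existence of a canonical tail matching the UU-occurrences
of a given suffix word. -/
lemma exT : ∀ (n : ℕ) (w : List Step), w.length ≤ n → ¬ fsp w 0 →
    (∀ i, fsp w i → i + 3 ≤ w.length) → 1 ≤ w.length →
    ∃ ps gf, (∀ p ∈ ps, 2 ≤ p.2) ∧
      (∀ s : ℕ, (Tw ps gf s).length = w.length) ∧
      (∀ s i, fsp (Tw ps gf s) i ↔ fsp w i) := by
  intro n
  induction n with
  | zero => intro w hn _ _ h1; omega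
  | succ n ih =>
    intro w hn h0 hL h1
    classical
    by_cases hex : ∃ i, fsp w i
    · set a := Nat.find hex with hadef
      have ha : fsp w a := Nat.find_spec hex
      have hmin : ∀ j, j < a → ¬ fsp w j := fun j hj => Nat.find_min hex hj
      have ha1 : 1 ≤ a := by
        rcases Nat.eq_zero_or_pos a with h | h
        · exact absurd (h ▸ ha) h0
        · omega
      have hexq : ∃ j, a ≤ j ∧ ¬ fsp w j := by
        refine ⟨w.length, ?_, ?_⟩
        · have := hL a ha; omega
        · intro hf; have := hL _ hf; omega
      set e := Nat.find hexq with hedef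
      obtain ⟨hae, hne⟩ : a ≤ e ∧ ¬ fsp w e := Nat.find_spec hexq
      have hemin : ∀ j, a ≤ j → j < e → fsp w j := by
        intro j hja hje
        by_contra hcon
        exact Nat.find_min hexq hje ⟨hja, hcon⟩
      have hea : a + 1 ≤ e := by
        rcases Nat.eq_or_lt_of_le hae with h | h
        · exact absurd (h ▸ ha) hne
        · omega
      have hfse : fsp w (e - 1) := hemin (e - 1) (by omega) (by omega)
      have hlen_e : e + 2 ≤ w.length := by have := hL _ hfse; omega
      set w' := w.drop (e + 1) with hw'
      have hw'len : w'.length = w.length - (e + 1) := by simp [hw']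
      have h0' : ¬ fsp w' 0 := by
        rw [fsp_drop]
        intro hf
        refine hne ⟨?_, ?_⟩
        · have := hfse.2
          rwa [show e - 1 + 1 = e from by omega] at this
        · simpa using hf.1
      have hL' : ∀ i, fsp w' i → i + 3 ≤ w'.length := by
        intro i hf
        rw [fsp_drop] at hf
        have := hL _ hf
        omega
      have h1' : 1 ≤ w'.length := by omega
      have hn' : w'.length ≤ n := by omega
      obtain ⟨ps', gf, hps', hlen', hfs'⟩ := ih w' hn' h0' hL' h1'
      set k := e + 1 - a with hk
      have hk2 : 2 ≤ k := by omega
      refine ⟨(gapEnc a, k) :: ps', gf, ?_, ?_, ?_⟩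
      · intro p hp
        rcases List.mem_cons.mp hp with h | h
        · rw [h]; exact hk2
        · exact hps' p h
      · intro s
        have : Tw ((gapEnc a, k) :: ps') gf s = gw (gapEnc a) 1 ++ Upow k ++ Tw ps' gf s := rfl
        rw [this]
        simp only [List.length_append, length_Upow, gapEnc_len a ha1, hlen' s]
        omega
      · intro s i
        rw [fsp_Tw_cons _ _ _ _ _ hk2 i, gapEnc_len a ha1, hfs' s,
          runDecomp ha hmin hne hemin hea i]
        have hak : a + k = e + 1 := by omega
        rw [hak]
        constructor
        · rintro (⟨hh1, hh2⟩ | ⟨hh1, hh2⟩)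
          · exact Or.inl ⟨hh1, by omega⟩
          · exact Or.inr ⟨hh1, hh2⟩
        · rintro (⟨hh1, hh2⟩ | ⟨hh1, hh2⟩)
          · exact Or.inl ⟨hh1, by omega⟩
          · exact Or.inr ⟨hh1, hh2⟩
    · push_neg at hex
      refine ⟨[], gapEnc w.length, fun p hp => absurd hp List.not_mem_nil, ?_, ?_⟩
      · intro s
        exact gapEnc_len w.length h1 s
      · intro s i
        exact iff_of_false (fsp_Tw_nil _ s i) (hex i)

lemma InE_UDpow (K : ℕ) : InE (UDpow K) := by
  refine ⟨fun i => lb_UD K i, ?_, ?_⟩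
  · rw [hgt_eq, List.take_of_length_le (le_refl _), S_UDpow]
  · intro i k h
    exact absurd h (fun h => UDpow_C h)

/-- Existence of a canonical representative. -/
lemma exists_canonical {P : List Step} (hP : InE P) :
    ∃ Q, (InE Q ∧ InF Q) ∧ Q.length = P.length ∧ (∀ i, fsp P i ↔ fsp Q i) := by
  classical
  by_cases hex : ∃ i, fsp P i
  · set a := Nat.find hex with hadef
    have ha : fsp P a := Nat.find_spec hex
    have hmin : ∀ j, j < a → ¬ fsp P j := fun j hj => Nat.find_min hex hj
    have haeven : a % 2 = 0 := min_fsp_even hP ha hmin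
    have hexq : ∃ j, a ≤ j ∧ ¬ fsp P j := by
      refine ⟨P.length, ?_, ?_⟩
      · have := PL1 hP ha; omega
      · intro hf; have := PL1 hP hf; omega
    set e := Nat.find hexq with hedef
    obtain ⟨hae, hne⟩ : a ≤ e ∧ ¬ fsp P e := Nat.find_spec hexq
    have hemin : ∀ j, a ≤ j → j < e → fsp P j := by
      intro j hja hje
      by_contra hcon
      exact Nat.find_min hexq hje ⟨hja, hcon⟩
    have hea : a + 1 ≤ e := by
      rcases Nat.eq_or_lt_of_le hae with h | h
      · exact absurd (h ▸ ha) hne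
      · omega
    have hfse : fsp P (e - 1) := hemin (e - 1) (by omega) (by omega)
    have hlen_e : e + 2 ≤ P.length := by have := PL1 hP hfse; omega
    set w' := P.drop (e + 1) with hw'
    have hw'len : w'.length = P.length - (e + 1) := by simp [hw']
    have h0' : ¬ fsp w' 0 := by
      rw [fsp_drop]
      intro hf
      refine hne ⟨?_, ?_⟩
      · have := hfse.2
        rwa [show e - 1 + 1 = e from by omega] at this
      · simpa using hf.1
    have hL' : ∀ i, fsp w' i → i + 3 ≤ w'.length := by
      intro i hf
      rw [fsp_drop] at hf
      have := PL1 hP hf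
      omega
    have h1' : 1 ≤ w'.length := by omega
    obtain ⟨ps', gf, hps', hlen', hfs'⟩ := exT w'.length w' (le_refl _) h0' hL' h1'
    set k := e + 1 - a with hk
    have hk2 : 2 ≤ k := by omega
    obtain ⟨s, hInE, hInF⟩ := canonical_good (a / 2) k ps' gf hk2 hps'
    set Q := UDpow (a / 2) ++ Upow k ++ Tw ps' gf s with hQ
    refine ⟨Q, ⟨hInE, hInF⟩, ?_, ?_⟩
    · rw [hQ]
      simp only [List.length_append, length_UDpow, length_Upow, hlen' s]
      omega
    · intro i
      rw [hQ, fsp_W (a / 2) k ps' gf s hk2 i,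
        runDecomp ha hmin hne hemin hea i, hfs' s]
      have h2l0 : 2 * (a / 2) = a := by omega
      have hak : a + k = e + 1 := by omega
      rw [h2l0, hak]
      constructor
      · rintro (⟨hh1, hh2⟩ | ⟨hh1, hh2⟩)
        · exact Or.inl ⟨hh1, by omega⟩
        · exact Or.inr ⟨hh1, hh2⟩
      · rintro (⟨hh1, hh2⟩ | ⟨hh1, hh2⟩)
        · exact Or.inl ⟨hh1, by omega⟩
        · exact Or.inr ⟨hh1, hh2⟩
  · push_neg at hex
    have heven := even_len_of_no_fsp hP hex
    refine ⟨UDpow (P.length / 2), ⟨InE_UDpow _, Or.inl ⟨_, rfl⟩⟩, ?_, ?_⟩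
    · simp; omega
    · intro i
      exact iff_of_false (hex i) (fsp_UDpow _ i)

end CatProof
namespace CatProof

def headK : List (ℕ × ℕ × Bool) → ℕ → ℕ
  | [], kr => kr
  | t :: _, _ => t.1

def psOf : List (ℕ × ℕ × Bool) → ℕ → List ((ℕ × Bool) × ℕ)
  | [], _ => []
  | t :: rest, kr => ((t.2.1, t.2.2), headK rest kr) :: psOf rest kr

lemma psOf_word : ∀ (mids : List (ℕ × ℕ × Bool)) (kr m s : ℕ) (b : Bool),
    (mids.map (fun t => Upow t.1 ++ DUpow t.2.1 ++
      (if t.2.2 then [Step.D, Step.D] else [Step.D]))).flatten ++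
    Upow kr ++ DUpow m ++ (if b then [Step.D, cfin s] else [cfin s]) =
    Upow (headK mids kr) ++ Tw (psOf mids kr) (m, b) s := by
  intro mids
  induction mids with
  | nil =>
    intro kr m s b
    show [] ++ Upow kr ++ DUpow m ++ _ = Upow kr ++ gw (m, b) s
    rw [gw]
    simp [List.append_assoc]
  | cons t rest ih =>
    intro kr m s b
    rcases t with ⟨k, j, bb⟩
    show ((Upow k ++ DUpow j ++ _) ++ _) ++ Upow kr ++ DUpow m ++ _ =
      Upow k ++ (gw (j, bb) 1 ++ Upow (headK rest kr) ++ Tw (psOf rest kr) (m, b) s)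
    have ihh := ih kr m s b
    simp only [List.append_assoc] at ihh ⊢
    rw [ihh, gw_one]
    simp [List.append_assoc]

lemma psOf_constraints : ∀ (mids : List (ℕ × ℕ × Bool)) (kr : ℕ),
    (∀ t ∈ mids, 2 ≤ t.1) → 2 ≤ kr →
    2 ≤ headK mids kr ∧ ∀ p ∈ psOf mids kr, 2 ≤ p.2 := by
  intro mids
  induction mids with
  | nil => intro kr _ hkr; exact ⟨hkr, by simp [psOf]⟩
  | cons t rest ih =>
    intro kr hm hkr
    obtain ⟨ih1, ih2⟩ := ih kr (fun q hq => hm q (List.mem_cons_of_mem _ hq)) hkr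
    refine ⟨hm t List.mem_cons_self, ?_⟩
    intro p hp
    rcases List.mem_cons.mp hp with h | h
    · rw [h]; exact ih1
    · exact ih2 p h

lemma psOf_inj : ∀ (mids mids' : List (ℕ × ℕ × Bool)) (kr kr' : ℕ),
    headK mids kr = headK mids' kr' → psOf mids kr = psOf mids' kr' →
    mids = mids' ∧ kr = kr' := by
  intro mids
  induction mids with
  | nil =>
    intro mids' kr kr' hh hp
    cases mids' with
    | nil => exact ⟨rfl, hh⟩
    | cons t' rest' => exact absurd hp.symm (by simp [psOf])
  | cons t rest ih =>
    intro mids' kr kr' hh hp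
    cases mids' with
    | nil => exact absurd hp (by simp [psOf])
    | cons t' rest' =>
      simp only [psOf, List.cons.injEq] at hp
      obtain ⟨hp1, hp2⟩ := hp
      obtain ⟨e1, e2⟩ := Prod.mk.injEq _ _ _ _ ▸ hp1
      obtain ⟨ihe1, ihe2⟩ := ih rest' _ _ (by rw [e2]) hp2
      refine ⟨?_, ihe2⟩
      have ht : t = t' := by
        rcases t with ⟨k, j, bb⟩
        rcases t' with ⟨k', j', bb'⟩
        simp only [headK] at hh
        have := congrArg Prod.fst hp1
        have := congrArg (fun q => q.1.2) hp1
        simp_all [Prod.ext_iff]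
      rw [ht, ihe1]

/-- A tail word's body: everything except the final `cfin s`. -/
def Tbody : List ((ℕ × Bool) × ℕ) → (ℕ × Bool) → List Step
  | [], gf => DUpow gf.1 ++ (if gf.2 then [Step.D] else [])
  | (g, k) :: ps, gf => gw g 1 ++ Upow k ++ Tbody ps gf

lemma Tw_eq_body : ∀ (ps : List ((ℕ × Bool) × ℕ)) (gf : ℕ × Bool) (s : ℕ),
    Tw ps gf s = Tbody ps gf ++ [cfin s] := by
  intro ps
  induction ps with
  | nil =>
    intro gf s
    show gw gf s = _
    rcases gf with ⟨m, b⟩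
    cases b
    · rw [gw_false]; simp [Tbody]
    · rw [gw_true]; simp [Tbody]
  | cons p ps ih =>
    intro gf s
    rcases p with ⟨g, k⟩
    show gw g 1 ++ Upow k ++ Tw ps gf s = _
    rw [ih gf s]
    show _ = gw g 1 ++ Upow k ++ Tbody ps gf ++ [cfin s]
    simp [List.append_assoc]

/-- `s` is determined by the rest of the data for a path in ℰ. -/
lemma s_determined {l0 k1 : ℕ} {ps : List ((ℕ × Bool) × ℕ)} {gf : ℕ × Bool} {s : ℕ}
    (hE : InE (UDpow l0 ++ Upow k1 ++ Tw ps gf s)) :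
    (s : ℤ) = (k1 : ℤ) + S (Tbody ps gf) := by
  have h0 := hE.2.1
  rw [hgt_eq, List.take_of_length_le (le_refl _)] at h0
  rw [Tw_eq_body] at h0
  simp only [S_append, S_UDpow, S_Upow] at h0
  have : S [cfin s] = -(s : ℤ) := by simp [S]
  rw [this] at h0
  omega

lemma fsp_W_min {l0 k1 : ℕ} {ps : List ((ℕ × Bool) × ℕ)} {gf : ℕ × Bool} {s : ℕ}
    (hk : 2 ≤ k1) :
    fsp (UDpow l0 ++ Upow k1 ++ Tw ps gf s) (2 * l0) ∧
    ∀ i, i < 2 * l0 → ¬ fsp (UDpow l0 ++ Upow k1 ++ Tw ps gf s) i := by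
  constructor
  · rw [fsp_W l0 k1 ps gf s hk]
    exact Or.inl ⟨le_refl _, by omega⟩
  · intro i hi hf
    rw [fsp_W l0 k1 ps gf s hk] at hf
    rcases hf with ⟨h1, _⟩ | ⟨h1, _⟩ <;> omega

/-- Injectivity of the tail-word construction from UU-data and length. -/
lemma injT : ∀ (ps ps' : List ((ℕ × Bool) × ℕ)) (gf gf' : ℕ × Bool) (s s' : ℕ),
    (∀ p ∈ ps, 2 ≤ p.2) → (∀ p ∈ ps', 2 ≤ p.2) →
    (Tw ps gf s).length = (Tw ps' gf' s').length →
    (∀ i, fsp (Tw ps gf s) i ↔ fsp (Tw ps' gf' s') i) →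
    ps = ps' ∧ gf = gf' := by
  intro ps
  induction ps with
  | nil =>
    intro ps' gf gf' s s' _ hps' hlen hfs
    cases ps' with
    | nil =>
      refine ⟨rfl, ?_⟩
      rcases gf with ⟨m, b⟩
      rcases gf' with ⟨m', b'⟩
      have h1 : (Tw [] (m, b) s).length = 2 * m + 1 + bit b := by
        show (gw (m, b) s).length = _; simp
      have h2 : (Tw [] (m', b') s').length = 2 * m' + 1 + bit b' := by
        show (gw (m', b') s').length = _; simp
      rw [h1, h2] at hlen
      cases b <;> cases b' <;> simp [bit] at hlen <;> simp <;> omega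
    | cons p' ps'2 =>
      exfalso
      rcases p' with ⟨g', k'⟩
      have hk' : 2 ≤ k' := hps' _ List.mem_cons_self
      have hf : fsp (Tw ((g', k') :: ps'2) gf' s') (gw g' 1).length := by
        rw [fsp_Tw_cons _ _ _ _ _ hk']
        exact Or.inl ⟨le_refl _, by omega⟩
      exact fsp_Tw_nil gf s _ ((hfs _).mpr hf)
  | cons p ps ih =>
    intro ps' gf gf' s s' hps hps' hlen hfs
    rcases p with ⟨g, k⟩
    have hk : 2 ≤ k := hps _ List.mem_cons_self
    cases ps' with
    | nil =>
      exfalso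
      have hf : fsp (Tw ((g, k) :: ps) gf s) (gw g 1).length := by
        rw [fsp_Tw_cons _ _ _ _ _ hk]
        exact Or.inl ⟨le_refl _, by omega⟩
      exact fsp_Tw_nil gf' s' _ ((hfs _).mp hf)
    | cons p' ps'2 =>
      rcases p' with ⟨g', k'⟩
      have hk' : 2 ≤ k' := hps' _ List.mem_cons_self
      have hfT : fsp (Tw ((g, k) :: ps) gf s) (gw g 1).length := by
        rw [fsp_Tw_cons _ _ _ _ _ hk]
        exact Or.inl ⟨le_refl _, by omega⟩
      have hfT' : fsp (Tw ((g', k') :: ps'2) gf' s') (gw g' 1).length := by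
        rw [fsp_Tw_cons _ _ _ _ _ hk']
        exact Or.inl ⟨le_refl _, by omega⟩
      have hG : (gw g 1).length = (gw g' 1).length := by
        have h1 := (hfs _).mp hfT
        rw [fsp_Tw_cons _ _ _ _ _ hk'] at h1
        have h2 := (hfs _).mpr hfT'
        rw [fsp_Tw_cons _ _ _ _ _ hk] at h2
        rcases h1 with ⟨h1, _⟩ | ⟨h1, _⟩ <;> rcases h2 with ⟨h2, _⟩ | ⟨h2, _⟩ <;> omega
      have hgg : g = g' := by
        rcases g with ⟨j, bb⟩
        rcases g' with ⟨j', bb'⟩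
        rw [length_gw, length_gw] at hG
        cases bb <;> cases bb' <;> simp [bit] at hG <;> simp <;> omega
      subst hgg
      have hkk : k = k' := by
        by_contra hne
        rcases Nat.lt_or_ge k k' with hlt | hge
        · have h1 : fsp (Tw ((g, k') :: ps'2) gf' s') ((gw g 1).length + k - 1) := by
            rw [fsp_Tw_cons _ _ _ _ _ hk']
            exact Or.inl ⟨by omega, by omega⟩
          have h2 := (hfs _).mpr h1
          rw [fsp_Tw_cons _ _ _ _ _ hk] at h2
          rcases h2 with ⟨_, h2⟩ | ⟨h2, _⟩ <;> omega
        · have hlt : k' < k := by omega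
          have h1 : fsp (Tw ((g, k) :: ps) gf s) ((gw g 1).length + k' - 1) := by
            rw [fsp_Tw_cons _ _ _ _ _ hk]
            exact Or.inl ⟨by omega, by omega⟩
          have h2 := (hfs _).mp h1
          rw [fsp_Tw_cons _ _ _ _ _ hk'] at h2
          rcases h2 with ⟨_, h2⟩ | ⟨h2, _⟩ <;> omega
      subst hkk
      have htail : ∀ i, fsp (Tw ps gf s) i ↔ fsp (Tw ps'2 gf' s') i := by
        intro i
        have hh := hfs ((gw g 1).length + k + i)
        rw [fsp_Tw_cons _ _ _ _ _ hk, fsp_Tw_cons _ _ _ _ _ hk',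
          show (gw g 1).length + k + i - ((gw g 1).length + k) = i from by omega] at hh
        constructor
        · intro hf
          rcases hh.mp (Or.inr ⟨by omega, hf⟩) with ⟨_, hc⟩ | ⟨_, hc⟩
          · omega
          · exact hc
        · intro hf
          rcases hh.mpr (Or.inr ⟨by omega, hf⟩) with ⟨_, hc⟩ | ⟨_, hc⟩
          · omega
          · exact hc
      have hlentail : (Tw ps gf s).length = (Tw ps'2 gf' s').length := by
        have e1 : (Tw ((g, k) :: ps) gf s).length =
            (gw g 1).length + k + (Tw ps gf s).length := by
          show (gw g 1 ++ Upow k ++ Tw ps gf s).length = _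
          simp; omega
        have e2 : (Tw ((g, k) :: ps'2) gf' s').length =
            (gw g 1).length + k + (Tw ps'2 gf' s').length := by
          show (gw g 1 ++ Upow k ++ Tw ps'2 gf' s').length = _
          simp; omega
        rw [e1, e2] at hlen
        omega
      obtain ⟨ih1, ih2⟩ := ih ps'2 gf gf' s s'
        (fun q hq => hps q (List.mem_cons_of_mem _ hq))
        (fun q hq => hps' q (List.mem_cons_of_mem _ hq)) hlentail htail
      rw [ih1]
      exact ⟨rfl, ih2⟩

end CatProof
namespace CatProof

lemma InF_W {Q : List Step} (l0 : ℕ) (mids : List (ℕ × ℕ × Bool)) (kr m s : ℕ) (b : Bool)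
    (hQeq : Q = UDpow l0 ++
      (mids.map (fun t => Upow t.1 ++ DUpow t.2.1 ++
        (if t.2.2 then [Step.D, Step.D] else [Step.D]))).flatten ++
      Upow kr ++ DUpow m ++ (if b then [Step.D, cfin s] else [cfin s])) :
    Q = UDpow l0 ++ Upow (headK mids kr) ++ Tw (psOf mids kr) (m, b) s := by
  rw [hQeq]
  have h := psOf_word mids kr m s b
  simp only [List.append_assoc] at h ⊢
  rw [h]

lemma uniqueF {Q Q' : List Step} (hEQ : InE Q) (hFQ : InF Q) (hEQ' : InE Q') (hFQ' : InF Q')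
    (hlen : Q.length = Q'.length) (hfs : ∀ i, fsp Q i ↔ fsp Q' i) : Q = Q' := by
  rcases hFQ with ⟨K, hK⟩ | ⟨l0, mids, kr, m, s, b, hm, hkr, hs1, hQeq⟩
  · rcases hFQ' with ⟨K', hK'⟩ | ⟨l0', mids', kr', m', s', b', hm', hkr', hs1', hQ'eq⟩
    · have : K = K' := by
        rw [hK, hK'] at hlen
        simp at hlen
        omega
      rw [hK, hK', this]
    · exfalso
      obtain ⟨hh1', _⟩ := psOf_constraints mids' kr' hm' hkr'
      have hW' := InF_W l0' mids' kr' m' s' b' hQ'eq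
      have hf' : fsp Q' (2 * l0') := by
        rw [hW']
        exact (fsp_W_min hh1').1
      have := (hfs _).mpr hf'
      rw [hK] at this
      exact fsp_UDpow _ _ this
  · obtain ⟨hh1, hh2⟩ := psOf_constraints mids kr hm hkr
    have hW := InF_W l0 mids kr m s b hQeq
    rcases hFQ' with ⟨K', hK'⟩ | ⟨l0', mids', kr', m', s', b', hm', hkr', hs1', hQ'eq⟩
    · exfalso
      have hf : fsp Q (2 * l0) := by
        rw [hW]
        exact (fsp_W_min hh1).1
      have := (hfs _).mp hf
      rw [hK'] at this
      exact fsp_UDpow _ _ this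
    · obtain ⟨hh1', hh2'⟩ := psOf_constraints mids' kr' hm' hkr'
      have hW' := InF_W l0' mids' kr' m' s' b' hQ'eq
      have hfsW : ∀ i,
          fsp (UDpow l0 ++ Upow (headK mids kr) ++ Tw (psOf mids kr) (m, b) s) i ↔
          fsp (UDpow l0' ++ Upow (headK mids' kr') ++ Tw (psOf mids' kr') (m', b') s') i := by
        intro i
        rw [← hW, ← hW']
        exact hfs i
      have hmin := fsp_W_min (l0 := l0) (ps := psOf mids kr) (gf := (m, b)) (s := s) hh1
      have hmin' := fsp_W_min (l0 := l0') (ps := psOf mids' kr') (gf := (m', b')) (s := s') hh1'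
      have hl0 : l0 = l0' := by
        have a1 := (hfsW _).mp hmin.1
        have a2 := (hfsW _).mpr hmin'.1
        rcases Nat.lt_trichotomy l0 l0' with h | h | h
        · exact absurd a1 (hmin'.2 _ (by omega))
        · exact h
        · exact absurd a2 (hmin.2 _ (by omega))
      subst hl0
      have hk1 : headK mids kr = headK mids' kr' := by
        by_contra hne
        rcases Nat.lt_or_ge (headK mids kr) (headK mids' kr') with hlt | hge
        · have h1 : fsp (UDpow l0 ++ Upow (headK mids' kr') ++
              Tw (psOf mids' kr') (m', b') s') (2 * l0 + headK mids kr - 1) := by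
            rw [fsp_W _ _ _ _ _ hh1']
            exact Or.inl ⟨by omega, by omega⟩
          have h2 := (hfsW _).mpr h1
          rw [fsp_W _ _ _ _ _ hh1] at h2
          rcases h2 with ⟨c1, c2⟩ | ⟨c1, c2⟩ <;> omega
        · have hlt : headK mids' kr' < headK mids kr := by omega
          have h1 : fsp (UDpow l0 ++ Upow (headK mids kr) ++
              Tw (psOf mids kr) (m, b) s) (2 * l0 + headK mids' kr' - 1) := by
            rw [fsp_W _ _ _ _ _ hh1]
            exact Or.inl ⟨by omega, by omega⟩
          have h2 := (hfsW _).mp h1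
          rw [fsp_W _ _ _ _ _ hh1'] at h2
          rcases h2 with ⟨c1, c2⟩ | ⟨c1, c2⟩ <;> omega
      have htailfs : ∀ i, fsp (Tw (psOf mids kr) (m, b) s) i ↔
          fsp (Tw (psOf mids' kr') (m', b') s') i := by
        intro i
        have hh := hfsW (2 * l0 + headK mids kr + i)
        rw [fsp_W _ _ _ _ _ hh1, fsp_W _ _ _ _ _ hh1', ← hk1,
          show 2 * l0 + headK mids kr + i - (2 * l0 + headK mids kr) = i from by omega] at hh
        constructor
        · intro hf
          rcases hh.mp (Or.inr ⟨by omega, hf⟩) with ⟨_, hc⟩ | ⟨_, hc⟩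
          · omega
          · exact hc
        · intro hf
          rcases hh.mpr (Or.inr ⟨by omega, hf⟩) with ⟨_, hc⟩ | ⟨_, hc⟩
          · omega
          · exact hc
      have htaillen : (Tw (psOf mids kr) (m, b) s).length =
          (Tw (psOf mids' kr') (m', b') s').length := by
        have hl := hlen
        rw [hW, hW'] at hl
        simp only [List.length_append, length_UDpow, length_Upow] at hl
        omega
      obtain ⟨hps_eq, hgf_eq⟩ := injT _ _ _ _ s s' hh2 hh2' htaillen htailfs
      obtain ⟨hmids, hkr_eq⟩ := psOf_inj mids mids' kr kr' hk1 hps_eq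
      have hmm : m = m' := congrArg Prod.fst hgf_eq
      have hbb : b = b' := congrArg Prod.snd hgf_eq
      have hsd := s_determined (hW ▸ hEQ)
      have hsd' := s_determined (hW' ▸ hEQ')
      have hsZ : (s : ℤ) = (s' : ℤ) := by
        rw [hsd, hsd', hk1, hps_eq, hgf_eq]
      have hss : s = s' := by exact_mod_cast hsZ
      rw [hQeq, hQ'eq, hmids, hkr_eq, hmm, hbb, hss]

end CatProof
/-- ℱ is a complete set of representatives of the UU-equivalence classes of ℰ. -/
theorem F_complete_set_of_representatives_for_UUEquiv (P : List Step) (hP : InE P) :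
    ∃! Q : List Step, (InE Q ∧ InF Q) ∧ Q.length = P.length ∧ UUEquiv P Q := by
  obtain ⟨Q, ⟨hE, hF⟩, hlen, hfs⟩ := CatProof.exists_canonical hP
  refine ⟨Q, ⟨⟨hE, hF⟩, hlen, hfs⟩, ?_⟩
  rintro Q' ⟨⟨hE', hF'⟩, hlen', hfs'⟩
  exact CatProof.uniqueF hE' hF' hE hF (by rw [hlen', hlen])
    (fun i => ((hfs' i).symm.trans (hfs i)))
end
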